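/- arXiv:2507.17302 — 8 statements merged into one kernel-verified Lean document; each statement's English description precedes it below -/
import Mathlib

section
/- For any bipartite graph G = (A ∪ B, E), the vertex set A ∪ B admits a partition X ∪ Y such that Y is an independent set in G and the bipartite subgraph G[X,Y] (consisting of all edges of G with one endpoint in X and one in Y) contains a matching saturating X (i.e., a matching covering every vertex of X). -/
/-- For any (finite) bipartite graph `G`, the vertex set admits a partition `X ∪ Y`
(here `Y = Xᶜ`) such that `Y` is an independent set in `G` and the bipartite subgraph
`G[X,Y]` (all edges of `G` with one endpoint in `X` and one in `Y`) contains a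
matching saturating `X`. -/
theorem bipartite_partition_with_saturating_matching
    {V : Type*} [Fintype V] (G : SimpleGraph V)
    (hbip : G.Colorable 2) :
    ∃ X : Set V,
      (∀ v ∈ Xᶜ, ∀ w ∈ Xᶜ, ¬ G.Adj v w) ∧
      ∃ M : G.Subgraph, M.IsMatching ∧ X ⊆ M.verts ∧
        ∀ ⦃v w : V⦄, M.Adj v w → (v ∈ X ↔ w ∈ Xᶜ) := by
  classical
  obtain ⟨c⟩ := hbip
  -- a maximum independent set Y
  obtain ⟨Y, hYmem, hYmax⟩ := Finset.exists_max_image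
    ((Finset.univ : Finset (Finset V)).filter
      (fun s => ∀ v ∈ s, ∀ w ∈ s, ¬ G.Adj v w)) Finset.card
    ⟨∅, by simp⟩
  have hYind : ∀ v ∈ Y, ∀ w ∈ Y, ¬ G.Adj v w := by
    simpa using (Finset.mem_filter.mp hYmem).2
  have hYmax' : ∀ Z : Finset V, (∀ v ∈ Z, ∀ w ∈ Z, ¬ G.Adj v w) → Z.card ≤ Y.card := by
    intro Z hZ
    exact hYmax Z (Finset.mem_filter.mpr ⟨Finset.mem_univ _, hZ⟩)
  -- swap lemma: an independent set T disjoint from Y has at least |T| neighbors in Y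
  have hswap : ∀ T : Finset V, Disjoint T Y → (∀ v ∈ T, ∀ w ∈ T, ¬ G.Adj v w) →
      T.card ≤ (Y.filter (fun y => ∃ a ∈ T, G.Adj a y)).card := by
    intro T hdisj hTind
    set N := Y.filter (fun y => ∃ a ∈ T, G.Adj a y) with hN
    have hNY : N ⊆ Y := Finset.filter_subset _ _
    have hY1ind : ∀ v ∈ (Y \ N) ∪ T, ∀ w ∈ (Y \ N) ∪ T, ¬ G.Adj v w := by
      intro v hv w hw hadj
      rcases Finset.mem_union.mp hv with hv | hv <;>
      rcases Finset.mem_union.mp hw with hw | hw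
      · exact hYind v (Finset.mem_sdiff.mp hv).1 w (Finset.mem_sdiff.mp hw).1 hadj
      · exact (Finset.mem_sdiff.mp hv).2 (Finset.mem_filter.mpr
          ⟨(Finset.mem_sdiff.mp hv).1, w, hw, hadj.symm⟩)
      · exact (Finset.mem_sdiff.mp hw).2 (Finset.mem_filter.mpr
          ⟨(Finset.mem_sdiff.mp hw).1, v, hv, hadj⟩)
      · exact hTind v hv w hw hadj
    have hcard1 : ((Y \ N) ∪ T).card = (Y \ N).card + T.card := by
      rw [Finset.card_union_of_disjoint]
      exact Finset.disjoint_left.mpr (fun a ha hb =>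
        Finset.disjoint_left.mp hdisj hb (Finset.mem_sdiff.mp ha).1)
    have hcard2 : (Y \ N).card = Y.card - N.card := Finset.card_sdiff_of_subset hNY
    have hle := hYmax' _ hY1ind
    have hNle : N.card ≤ Y.card := Finset.card_le_card hNY
    omega
  -- Hall's condition for the bipartite graph between X := Yᶜ and Y
  set Xf : Finset V := Yᶜ with hXf
  have hdisjXY : ∀ v ∈ Xf, v ∉ Y := by
    intro v hv; simpa [hXf] using hv
  have hall : ∀ s : Finset ↥Xf,
      s.card ≤ (s.biUnion (fun x => Y.filter (fun y => G.Adj ↑x y))).card := by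
    intro s
    set S : Finset V := s.image Subtype.val with hS
    have hScard : S.card = s.card := Finset.card_image_of_injective s Subtype.val_injective
    have hSX : ∀ a ∈ S, a ∉ Y := by
      intro a ha
      obtain ⟨x, _, rfl⟩ := Finset.mem_image.mp ha
      exact hdisjXY _ x.2
    -- split S by color
    set SA := S.filter (fun a => c a = 0) with hSA
    set SB := S.filter (fun a => c a ≠ 0) with hSB
    have hmono : ∀ T : Finset V, T ⊆ S → (∀ a ∈ T, ∀ b ∈ T, c a = c b) →
        (∀ v ∈ T, ∀ w ∈ T, ¬ G.Adj v w) := by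
      intro T hTS hc v hv w hw hadj
      exact c.valid hadj (hc v hv w hw)
    have hA := hswap SA (Finset.disjoint_left.mpr
        (fun a ha => hSX a (Finset.mem_of_mem_filter _ ha)))
      (hmono SA (Finset.filter_subset _ _) (by
        intro a ha b hb
        rw [(Finset.mem_filter.mp ha).2, (Finset.mem_filter.mp hb).2]))
    have hB := hswap SB (Finset.disjoint_left.mpr
        (fun a ha => hSX a (Finset.mem_of_mem_filter _ ha)))
      (hmono SB (Finset.filter_subset _ _) (by
        intro a ha b hb
        have ha' := (Finset.mem_filter.mp ha).2
        have hb' := (Finset.mem_filter.mp hb).2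
        omega))
    set NA := Y.filter (fun y => ∃ a ∈ SA, G.Adj a y) with hNA
    set NB := Y.filter (fun y => ∃ a ∈ SB, G.Adj a y) with hNB
    have hdisjN : Disjoint NA NB := by
      rw [Finset.disjoint_left]
      intro y hyA hyB
      obtain ⟨-, a, ha, haadj⟩ := Finset.mem_filter.mp hyA
      obtain ⟨-, b, hb, hbadj⟩ := Finset.mem_filter.mp hyB
      have hca := (Finset.mem_filter.mp ha).2
      have hcb := (Finset.mem_filter.mp hb).2
      have h1 : c a ≠ c y := c.valid haadj
      have h2 : c b ≠ c y := c.valid hbadj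
      omega
    have hsub : NA ∪ NB ⊆ s.biUnion (fun x => Y.filter (fun y => G.Adj ↑x y)) := by
      intro y hy
      rcases Finset.mem_union.mp hy with hy | hy <;>
        obtain ⟨hyY, a, ha, haadj⟩ := Finset.mem_filter.mp hy <;>
        · have haS : a ∈ S := Finset.mem_of_mem_filter _ ha
          obtain ⟨x, hx, rfl⟩ := Finset.mem_image.mp haS
          exact Finset.mem_biUnion.mpr ⟨x, hx, Finset.mem_filter.mpr ⟨hyY, haadj⟩⟩
    have hSsplit : SA.card + SB.card = S.card := by
      rw [hSA, hSB, Finset.card_filter_add_card_filter_not]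
    calc s.card = S.card := hScard.symm
      _ = SA.card + SB.card := hSsplit.symm
      _ ≤ NA.card + NB.card := Nat.add_le_add hA hB
      _ = (NA ∪ NB).card := (Finset.card_union_of_disjoint hdisjN).symm
      _ ≤ _ := Finset.card_le_card hsub
  obtain ⟨f, hfinj, hf⟩ :=
    (Finset.all_card_le_biUnion_card_iff_exists_injective
      (fun x : ↥Xf => Y.filter (fun y => G.Adj ↑x y))).mp hall
  have hfY : ∀ x : ↥Xf, f x ∈ Y := fun x => (Finset.mem_filter.mp (hf x)).1
  have hfadj : ∀ x : ↥Xf, G.Adj ↑x (f x) := fun x => (Finset.mem_filter.mp (hf x)).2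
  -- build the matching subgraph
  refine ⟨↑Xf, ?_, ?_⟩
  · intro v hv w hw
    have hv' : v ∈ Y := by
      simp only [Set.mem_compl_iff, Finset.coe_compl, hXf] at hv
      simpa using hv
    have hw' : w ∈ Y := by
      simp only [Set.mem_compl_iff, Finset.coe_compl, hXf] at hw
      simpa using hw
    exact hYind v hv' w hw'
  · refine ⟨{
      verts := ↑Xf ∪ Set.range f
      Adj := fun v w => ∃ x : ↥Xf, (v = ↑x ∧ w = f x) ∨ (w = ↑x ∧ v = f x)
      adj_sub := by
        rintro v w ⟨x, ⟨rfl, rfl⟩ | ⟨rfl, rfl⟩⟩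
        · exact hfadj x
        · exact (hfadj x).symm
      edge_vert := by
        rintro v w ⟨x, ⟨rfl, rfl⟩ | ⟨rfl, h⟩⟩
        · exact Or.inl x.2
        · exact Or.inr ⟨x, h.symm⟩
      symm := by
        constructor
        rintro v w ⟨x, ⟨rfl, rfl⟩ | ⟨rfl, rfl⟩⟩
        · exact ⟨x, Or.inr ⟨rfl, rfl⟩⟩
        · exact ⟨x, Or.inl ⟨rfl, rfl⟩⟩ }, ?_, ?_, ?_⟩
    · rintro v (hv | ⟨x0, rfl⟩)
      · have hv' : v ∈ Xf := hv
        refine ⟨f ⟨v, hv'⟩, ⟨⟨v, hv'⟩, Or.inl ⟨rfl, rfl⟩⟩, ?_⟩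
        rintro w ⟨x, ⟨hvx, rfl⟩ | ⟨rfl, hvf⟩⟩
        · congr 1
          exact Subtype.ext hvx.symm
        · exact absurd (hfY x) (hdisjXY _ (hvf ▸ hv'))
      · refine ⟨↑x0, ⟨x0, Or.inr ⟨rfl, rfl⟩⟩, ?_⟩
        rintro w ⟨x, ⟨hvx, rfl⟩ | ⟨rfl, hvf⟩⟩
        · exact absurd (hfY x0) (by rw [hvx]; exact hdisjXY _ x.2)
        · rw [hfinj hvf.symm]
    · intro v hv; exact Or.inl hv
    · rintro v w ⟨x, ⟨rfl, rfl⟩ | ⟨rfl, rfl⟩⟩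
      · simp only [Finset.mem_coe, Set.mem_compl_iff]
        constructor
        · intro _ h; exact hdisjXY _ h (hfY x)
        · intro _; exact x.2
      · simp only [Finset.mem_coe, Set.mem_compl_iff]
        constructor
        · intro h; exact absurd (hfY x) (hdisjXY _ h)
        · intro h
          exact absurd h (fun h' => h' x.2)
end

section
/- Let G = (X ∪ Y, E) be a connected bipartite graph with at least one vertex of odd degree in X and at least one vertex of odd degree in Y, and let V_odd be the set of odd-degree vertices of G. Then E admits a decomposition into exactly |V_odd|/2 open trails that contains at least one XY-trail, i.e., at least one open trail with one endpoint in X and the other endpoint in Y. -/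
open SimpleGraph Walk Finset

namespace EulerAux
section Euler
variable {V : Type*} [Fintype V] [DecidableEq V] {G : SimpleGraph V} [DecidableRel G.Adj]

/-- bound on trail length -/
theorem trail_length_le {u v : V} {p : G.Walk u v} (hp : p.IsTrail) :
    p.edges.length ≤ G.edgeFinset.card := by
  classical
  rw [← List.toFinset_card_of_nodup hp.edges_nodup]
  exact Finset.card_le_card (fun e he => by
    simpa [SimpleGraph.mem_edgeFinset] using p.edges_subset_edgeSet (List.mem_toFinset.mp he))

/-- extension: at a non-closed endpoint of a trail in an even graph there is an unused edge -/
theorem exists_extension (hev : ∀ v : V, Even (G.degree v)) {u v : V} {p : G.Walk u v}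
    (hp : p.IsTrail) (hne : u ≠ v) :
    ∃ w : V, ∃ h : G.Adj v w, s(v, w) ∉ p.edges := by
  classical
  have hodd : ¬ Even (p.edges.countP fun e => v ∈ e) := by
    rw [hp.even_countP_edges_iff v]
    intro h
    exact (h hne).2 rfl
  -- T' : incident p-edges as finset
  set T : Finset (Sym2 V) := p.edges.toFinset.filter (fun e => v ∈ e) with hT
  have hTcard : T.card = p.edges.countP fun e => v ∈ e := by
    rw [List.countP_eq_length_filter, hT,
      ← List.toFinset_card_of_nodup (hp.edges_nodup.filter _), List.toFinset_filter]
    simp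
  have hsub : T ⊆ G.incidenceFinset v := by
    intro e he
    rw [hT, Finset.mem_filter, List.mem_toFinset] at he
    rw [incidenceFinset_eq_filter, Finset.mem_filter, SimpleGraph.mem_edgeFinset]
    exact ⟨p.edges_subset_edgeSet he.1, he.2⟩
  have hne' : T ≠ G.incidenceFinset v := by
    intro h
    apply hodd
    rw [← hTcard, h, card_incidenceFinset_eq_degree]
    exact hev v
  obtain ⟨e, heI, heT⟩ := Finset.exists_of_ssubset (ssubset_of_subset_of_ne hsub hne')
  rw [incidenceFinset_eq_filter, Finset.mem_filter, SimpleGraph.mem_edgeFinset] at heI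
  obtain ⟨w, rfl⟩ := Sym2.mem_iff_exists.mp heI.2
  refine ⟨w, heI.1, fun hmem => heT ?_⟩
  rw [hT, Finset.mem_filter, List.mem_toFinset]
  exact ⟨hmem, Sym2.mem_mk_left _ _⟩

/-- Lemma A: any trail from w extends to a closed trail from w containing its edges. -/
theorem exists_closed_trail_aux (hev : ∀ v : V, Even (G.degree v)) :
    ∀ (n : ℕ) {w v : V} (p : G.Walk w v), p.IsTrail →
      G.edgeFinset.card - p.edges.length ≤ n →
      ∃ c : G.Walk w w, c.IsTrail ∧ ∀ e ∈ p.edges, e ∈ c.edges := by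
  intro n
  induction n with
  | zero =>
    intro w v p hp hn
    rcases eq_or_ne w v with rfl | hne
    · exact ⟨p, hp, fun e he => he⟩
    · exfalso
      obtain ⟨x, hadj, hnm⟩ := exists_extension hev hp hne
      have hlt : p.edges.length < G.edgeFinset.card := by
        have : (p.concat hadj).edges.length ≤ G.edgeFinset.card := by
          apply trail_length_le
          rw [isTrail_def, edges_concat, List.concat_eq_append, List.nodup_append]
          exact ⟨hp.edges_nodup, List.nodup_singleton _, by intro a ha b hb hab; simp at hb; exact hnm (by rw [← hb, ← hab]; exact ha)⟩
        rw [edges_concat, List.concat_eq_append, List.length_append] at this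
        simp only [List.length_singleton] at this
        omega
      omega
  | succ n ih =>
    intro w v p hp hn
    rcases eq_or_ne w v with rfl | hne
    · exact ⟨p, hp, fun e he => he⟩
    · obtain ⟨x, hadj, hnm⟩ := exists_extension hev hp hne
      have hp' : (p.concat hadj).IsTrail := by
        rw [isTrail_def, edges_concat, List.concat_eq_append, List.nodup_append]
        exact ⟨hp.edges_nodup, List.nodup_singleton _, by intro a ha b hb hab; simp at hb; exact hnm (by rw [← hb, ← hab]; exact ha)⟩
      obtain ⟨c, hc, hcov⟩ := ih (p.concat hadj) hp' (by
        rw [edges_concat, List.concat_eq_append, List.length_append]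
        simp only [List.length_singleton]
        omega)
      exact ⟨c, hc, fun e he => hcov e (by rw [edges_concat]; simp [he])⟩

theorem countP_eq_card_filter {l : List (Sym2 V)} (hl : l.Nodup) (x : V) :
    (l.countP fun e => x ∈ e) = ((l.toFinset).filter (fun e => x ∈ e)).card := by
  rw [List.countP_eq_length_filter,
    ← List.toFinset_card_of_nodup (hl.filter _), List.toFinset_filter]
  simp

instance instDecDel (l : List (Sym2 V)) : DecidableRel (G.deleteEdges {e | e ∈ l}).Adj :=
  fun v w => decidable_of_iff (G.Adj v w ∧ s(v, w) ∉ l) (by rw [deleteEdges_adj]; simp)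

theorem even_degree_deleteEdges {l : List (Sym2 V)} (hl : l.Nodup)
    (hsub : ∀ e ∈ l, e ∈ G.edgeSet) (hev : ∀ v : V, Even (G.degree v))
    (hcnt : ∀ x : V, Even (l.countP fun e => x ∈ e)) (x : V) :
    Even ((G.deleteEdges {e | e ∈ l}).degree x) := by
  classical
  set G' := G.deleteEdges {e | e ∈ l} with hG'
  have hinc : G'.incidenceFinset x
      = (G.incidenceFinset x).filter (fun e => e ∉ l) := by
    ext e
    simp only [mem_incidenceFinset, mem_filter]
    constructor
    · rintro ⟨he, hx⟩
      rw [hG', edgeSet_deleteEdges] at he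
      exact ⟨⟨he.1, hx⟩, he.2⟩
    · rintro ⟨⟨he, hx⟩, hne⟩
      exact ⟨by rw [hG', edgeSet_deleteEdges]; exact ⟨he, hne⟩, hx⟩
  have hpart : (G.incidenceFinset x).filter (fun e => e ∉ l)
      = G.incidenceFinset x \ ((l.toFinset).filter (fun e => x ∈ e)) := by
    ext e
    simp only [mem_filter, mem_sdiff, List.mem_toFinset, mem_incidenceFinset]
    constructor
    · rintro ⟨he, hne⟩
      exact ⟨he, fun h => hne h.1⟩
    · rintro ⟨he, hne⟩
      exact ⟨he, fun h => hne ⟨h, he.2⟩⟩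
  have hsubF : ((l.toFinset).filter (fun e => x ∈ e)) ⊆ G.incidenceFinset x := by
    intro e he
    rw [mem_filter, List.mem_toFinset] at he
    rw [mem_incidenceFinset]
    exact ⟨hsub e he.1, he.2⟩
  have hdeg : G'.degree x = G.degree x - (l.countP fun e => x ∈ e) := by
    rw [← card_incidenceFinset_eq_degree, ← card_incidenceFinset_eq_degree, hinc, hpart,
      Finset.card_sdiff_of_subset hsubF, countP_eq_card_filter hl]
  have hle : (l.countP fun e => x ∈ e) ≤ G.degree x := by
    rw [countP_eq_card_filter hl, ← card_incidenceFinset_eq_degree]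
    exact Finset.card_le_card hsubF
  rw [hdeg, Nat.even_sub hle]
  simp [hev x, hcnt x]

theorem attach_aux {u : V} (c : G.Walk u u) {a : V} (p : G.Walk a u)
    (hinv : ∃ x, G.Adj a x ∧ s(a, x) ∉ c.edges) :
    ∃ (w x : V), w ∈ c.support ∧ G.Adj w x ∧ s(w, x) ∉ c.edges := by
  by_cases hmem : a ∈ c.support
  · exact ⟨a, hinv.choose, hmem, hinv.choose_spec⟩
  · cases p with
    | nil => exact absurd c.start_mem_support hmem
    | @cons a b u h q =>
      refine attach_aux c q ⟨a, h.symm, fun hc => hmem ?_⟩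
      rw [Sym2.eq_swap] at hc
      exact c.fst_mem_support_of_mem_edges hc

/-- find attachment vertex on the circuit -/
theorem exists_attach {u : V} (c : G.Walk u u) {a b : V} (he : G.Adj a b)
    (hne : s(a, b) ∉ c.edges) (hconn : G.Preconnected) :
    ∃ (w x : V), w ∈ c.support ∧ G.Adj w x ∧ s(w, x) ∉ c.edges := by
  obtain ⟨p⟩ := hconn a u
  exact attach_aux c p ⟨b, he, hne⟩

theorem euler_step (hev : ∀ v : V, Even (G.degree v)) (hconn : G.Preconnected)
    {u : V} (c : G.Walk u u) (hc : c.IsTrail)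
    (hnc : ¬ ∀ e ∈ G.edgeSet, e ∈ c.edges) :
    ∃ (w : V) (c' : G.Walk w w), c'.IsTrail ∧ c.edges.length < c'.edges.length ∧
      ∀ e ∈ c.edges, e ∈ c'.edges := by
  classical
  push_neg at hnc
  obtain ⟨e, heG, hne⟩ := hnc
  induction e using Sym2.ind with
  | _ a b =>
  obtain ⟨w, x, hwsup, hadj, hnotin⟩ := exists_attach c (G.mem_edgeSet.mp heG) hne hconn
  set G' := G.deleteEdges {e | e ∈ c.edges} with hG'
  have hev' : ∀ v : V, Even (G'.degree v) :=
    even_degree_deleteEdges hc.edges_nodup (fun e he => c.edges_subset_edgeSet he) hev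
      (fun y => by
        have := hc.even_countP_edges_iff y
        simpa using this.mpr (fun h => absurd rfl h))
  have hadj' : G'.Adj w x := by
    rw [hG', deleteEdges_adj]
    exact ⟨hadj, hnotin⟩
  -- trail with one edge in G'
  have htrail : (Walk.cons hadj' Walk.nil).IsTrail := by
    simp [isTrail_def]
  obtain ⟨d0, hd0, hd0cov⟩ := exists_closed_trail_aux hev' (G'.edgeFinset.card)
    (Walk.cons hadj' Walk.nil) htrail (Nat.sub_le _ _)
  have hd0sub : ∀ e ∈ d0.edges, e ∈ G.edgeSet := fun e he => by
    have := d0.edges_subset_edgeSet he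
    rw [hG', edgeSet_deleteEdges] at this
    exact this.1
  have hd0notc : ∀ e ∈ d0.edges, e ∉ c.edges := fun e he => by
    have := d0.edges_subset_edgeSet he
    rw [hG', edgeSet_deleteEdges] at this
    exact this.2
  set d : G.Walk w w := d0.transfer G hd0sub with hd
  have hdedges : d.edges = d0.edges := edges_transfer _ _
  have hrot : ((c.rotate w hwsup).append d).IsTrail := by
    rw [isTrail_def, edges_append, List.nodup_append]
    refine ⟨((c.rotate_edges w hwsup).perm.symm).nodup hc.edges_nodup, ?_, ?_⟩
    · rw [hdedges]; exact hd0.edges_nodup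
    · intro e he b he' heq
      have : e ∈ c.edges := ((c.rotate_edges w hwsup).perm.mem_iff).mp he
      rw [hdedges] at he'
      exact hd0notc e (by rw [heq]; exact he') this
  refine ⟨w, (c.rotate w hwsup).append d, hrot, ?_, ?_⟩
  · rw [edges_append, List.length_append, hdedges,
      (c.rotate_edges w hwsup).perm.length_eq]
    have : s(w, x) ∈ d0.edges := hd0cov _ (by simp)
    have hpos : 0 < d0.edges.length := List.length_pos_of_mem this
    omega
  · intro e he
    rw [edges_append, List.mem_append]
    exact Or.inl (((c.rotate_edges w hwsup).perm.mem_iff).mpr he)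

theorem euler_exists (hev : ∀ v : V, Even (G.degree v)) (hconn : G.Preconnected)
    [Nonempty V] : ∃ (u : V) (c : G.Walk u u), c.IsEulerian := by
  classical
  suffices h : ∀ (n : ℕ) (u : V) (c : G.Walk u u), c.IsTrail →
      G.edgeFinset.card - c.edges.length ≤ n → ∃ (u' : V) (c' : G.Walk u' u'), c'.IsEulerian by
    obtain ⟨u⟩ := ‹Nonempty V›
    exact h G.edgeFinset.card u Walk.nil (by simp [isTrail_def]) (by simp)
  intro n
  induction n with
  | zero =>
    intro u c hc hn
    by_cases hall : ∀ e ∈ G.edgeSet, e ∈ c.edges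
    · exact ⟨u, c, hc.isEulerian_of_forall_mem hall⟩
    · exfalso
      obtain ⟨w, c', hc', hlt, _⟩ := euler_step hev hconn c hc hall
      have := trail_length_le hc'
      omega
  | succ n ih =>
    intro u c hc hn
    by_cases hall : ∀ e ∈ G.edgeSet, e ∈ c.edges
    · exact ⟨u, c, hc.isEulerian_of_forall_mem hall⟩
    · obtain ⟨w, c', hc', hlt, _⟩ := euler_step hev hconn c hc hall
      have := trail_length_le hc'
      exact ih w c' hc' (by omega)


end Euler

section Aux

variable {V : Type*} [Fintype V] [DecidableEq V] (G : SimpleGraph V) [DecidableRel G.Adj]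

/-- auxiliary graph: `G` plus an extra vertex joined to all odd-degree vertices -/
def G2 : SimpleGraph (V ⊕ Unit) where
  Adj v w := match v, w with
    | Sum.inl a, Sum.inl b => G.Adj a b
    | Sum.inl a, Sum.inr _ => Odd (G.degree a)
    | Sum.inr _, Sum.inl b => Odd (G.degree b)
    | Sum.inr _, Sum.inr _ => False
  symm := ⟨by rintro (a | a) (b | b) h <;> simp_all <;> exact h.symm⟩
  loopless := ⟨by rintro (a | a) h <;> simp_all <;> exact h.ne rfl⟩

variable {G}

@[simp] theorem G2_adj_inl_inl {a b : V} : (G2 G).Adj (Sum.inl a) (Sum.inl b) ↔ G.Adj a b :=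
  Iff.rfl
@[simp] theorem G2_adj_inl_inr {a : V} {u : Unit} :
    (G2 G).Adj (Sum.inl a) (Sum.inr u) ↔ Odd (G.degree a) := Iff.rfl
@[simp] theorem G2_adj_inr_inl {a : V} {u : Unit} :
    (G2 G).Adj (Sum.inr u) (Sum.inl a) ↔ Odd (G.degree a) := Iff.rfl
@[simp] theorem G2_adj_inr_inr {u u' : Unit} :
    ¬ (G2 G).Adj (Sum.inr u) (Sum.inr u') := fun h => h

instance : DecidableRel (G2 G).Adj := by
  rintro (a | a) (b | b)
  · exact decidable_of_iff (G.Adj a b) Iff.rfl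
  · exact decidable_of_iff (Odd (G.degree a)) Iff.rfl
  · exact decidable_of_iff (Odd (G.degree b)) Iff.rfl
  · exact Decidable.isFalse (by simp)

theorem G2_even_degree (v : V ⊕ Unit) : Even ((G2 G).degree v) := by
  classical
  cases v with
  | inl a =>
    have hnb : (G2 G).neighborFinset (Sum.inl a)
        = (G.neighborFinset a).map ⟨Sum.inl, Sum.inl_injective⟩
          ∪ (if Odd (G.degree a) then {Sum.inr ()} else ∅) := by
      ext w
      cases w <;> simp [mem_neighborFinset] <;> split <;> simp_all
    have hdisj : Disjoint ((G.neighborFinset a).map ⟨Sum.inl, Sum.inl_injective⟩)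
        (if Odd (G.degree a) then ({Sum.inr ()} : Finset (V ⊕ Unit)) else ∅) := by
      split <;> simp
    rw [SimpleGraph.degree, hnb, Finset.card_union_of_disjoint hdisj, Finset.card_map]
    rcases Nat.even_or_odd (G.degree a) with he | ho
    · rw [if_neg (by simp [Nat.not_odd_iff_even, he])]
      simpa using he
    · rw [if_pos ho]
      simp only [Finset.card_singleton]
      exact ho.add_one
  | inr u =>
    have hnb : (G2 G).neighborFinset (Sum.inr u)
        = (Finset.univ.filter fun v : V => Odd (G.degree v)).map ⟨Sum.inl, Sum.inl_injective⟩ := by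
      ext w
      cases w <;> simp [mem_neighborFinset]
    rw [SimpleGraph.degree, hnb, Finset.card_map]
    exact G.even_card_odd_degree_vertices

theorem G2_degree_z :
    (G2 G).degree (Sum.inr ()) = (Finset.univ.filter fun v : V => Odd (G.degree v)).card := by
  classical
  have hnb : (G2 G).neighborFinset (Sum.inr ())
      = (Finset.univ.filter fun v : V => Odd (G.degree v)).map ⟨Sum.inl, Sum.inl_injective⟩ := by
    ext w
    cases w <;> simp [mem_neighborFinset]
  rw [SimpleGraph.degree, hnb, Finset.card_map]

theorem G2_preconnected (hconn : G.Connected) (v0 : V) (hv0 : Odd (G.degree v0)) :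
    (G2 G).Preconnected := by
  have hmap : ∀ a b : V, (G2 G).Reachable (Sum.inl a) (Sum.inl b) := fun a b =>
    Reachable.map ⟨Sum.inl, fun h => h⟩ (hconn a b)
  have hz : ∀ a : V, (G2 G).Reachable (Sum.inl a) (Sum.inr ()) := fun a =>
    (hmap a v0).trans (Adj.reachable (by simp [hv0]))
  rintro (a | a) (b | b)
  · exact hmap a b
  · cases b; exact hz a
  · cases a; exact (hz b).symm
  · cases a; cases b; exact Reachable.refl _


/-- one block of the decomposition of the Euler circuit -/
def block (t : Σ x : V, Σ y : V, G.Walk x y) : List (Sym2 (V ⊕ Unit)) :=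
  s(Sum.inr (), Sum.inl t.1) ::
    (t.2.2.edges.map (Sym2.map Sum.inl) ++ [s(Sum.inl t.2.1, Sum.inr ())])

theorem inr_not_mem_map_inl (e : Sym2 V) :
    Sum.inr () ∉ Sym2.map (Sum.inl : V → V ⊕ Unit) e := by
  rw [Sym2.mem_map]
  rintro ⟨a, -, h⟩
  exact Sum.inl_ne_inr h

theorem peel : ∀ (n : ℕ) {x : V} (w : (G2 G).Walk (Sum.inl x) (Sum.inr ())),
    w.length ≤ n →
    ∃ (y : V) (seg : G.Walk x y) (rest : (G2 G).Walk (Sum.inr ()) (Sum.inr ())),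
      w.edges = seg.edges.map (Sym2.map Sum.inl) ++ (s(Sum.inl y, Sum.inr ()) :: rest.edges)
      ∧ rest.length < w.length := by
  intro n
  induction n with
  | zero =>
    intro x w hw
    cases w with
    | cons h q => simp at hw
  | succ n ih =>
    intro x w hw
    cases w with
    | @cons _ b _ h q =>
      cases b with
      | inl x' =>
        obtain ⟨y, seg, rest, hedges, hlen⟩ := ih q (by simpa using Nat.succ_le_succ_iff.mp hw)
        refine ⟨y, Walk.cons (G2_adj_inl_inl.mp h) seg, rest, ?_, ?_⟩
        · rw [edges_cons, hedges, edges_cons, List.map_cons, Sym2.map_pair_eq]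
          simp
        · simp only [length_cons]
          omega
      | inr u =>
        cases u
        exact ⟨x, Walk.nil, q, by simp, by simp⟩

theorem splitZ : ∀ (n : ℕ) (w : (G2 G).Walk (Sum.inr ()) (Sum.inr ())),
    w.length ≤ n →
    ∃ L : List (Σ x : V, Σ y : V, G.Walk x y),
      w.edges = (L.map block).flatten := by
  intro n
  induction n with
  | zero =>
    intro w hw
    cases w with
    | nil => exact ⟨[], by simp⟩
    | cons h q => simp at hw
  | succ n ih =>
    intro w hw
    cases w with
    | nil => exact ⟨[], by simp⟩
    | @cons _ b _ h q =>
      cases b with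
      | inr u => exact absurd h (by cases u; simp)
      | inl x =>
        obtain ⟨y, seg, rest, hedges, hlen⟩ :=
          peel q.length q le_rfl
        have hq : q.length ≤ n := Nat.succ_le_succ_iff.mp hw
        obtain ⟨L, hL⟩ := ih rest (by omega)
        refine ⟨⟨x, y, seg⟩ :: L, ?_⟩
        rw [edges_cons, hedges, hL]
        simp [block]

theorem sum_one_unique {l : List ℕ} (h : l.sum = 1) : ∃! i : Fin l.length, l.get i ≠ 0 := by
  have hex : ∃ i : Fin l.length, l.get i ≠ 0 := by
    by_contra hc
    push_neg at hc
    rw [← Fin.sum_univ_getElem] at h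
    simp only [List.get_eq_getElem] at hc
    rw [Finset.sum_eq_zero (fun i _ => hc i)] at h
    exact one_ne_zero h.symm
  obtain ⟨i, hi⟩ := hex
  refine ⟨i, hi, fun j hj => ?_⟩
  by_contra hne
  have h2 : l.get j + l.get i ≤ l.sum := by
    rw [← Fin.sum_univ_getElem]
    exact Finset.add_le_sum (fun _ _ => Nat.zero_le _) (Finset.mem_univ _)
      (Finset.mem_univ _) hne
  omega

/-- countP of an Eulerian circuit's edges incident to a vertex is the degree -/
theorem eulerian_countP {W : Type*} [Fintype W] [DecidableEq W] {H : SimpleGraph W}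
    [DecidableRel H.Adj] {u v : W} {p : H.Walk u v} (hp : p.IsEulerian) (x : W) :
    (p.edges.countP fun e => x ∈ e) = H.degree x := by
  classical
  have htf : p.edges.toFinset = H.edgeFinset := by
    ext e
    rw [List.mem_toFinset, hp.mem_edges_iff, SimpleGraph.mem_edgeFinset]
  rw [countP_eq_card_filter hp.isTrail.edges_nodup, htf, ← incidenceFinset_eq_filter,
    card_incidenceFinset_eq_degree]

theorem map_inl_mem_edgeSet {e : Sym2 V} (he : e ∈ G.edgeSet) :
    Sym2.map (Sum.inl : V → V ⊕ Unit) e ∈ (G2 G).edgeSet := by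
  induction e using Sym2.ind with
  | _ a b =>
    rw [Sym2.map_pair_eq]
    exact he

theorem segments_spec {W : (G2 G).Walk (Sum.inr ()) (Sum.inr ())} (hW : W.IsEulerian)
    {L : List (Σ x : V, Σ y : V, G.Walk x y)} (hL : W.edges = (L.map block).flatten) :
    (∀ t ∈ L, t.2.2.IsTrail ∧ t.1 ≠ t.2.1) ∧
    (∀ e ∈ G.edgeSet, ((L.map (fun t => t.2.2.edges.count e)).sum = 1)) ∧
    (∀ v : V, Odd (G.degree v) → ∃ t ∈ L, t.1 = v ∨ t.2.1 = v) ∧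
    2 * L.length = (univ.filter fun v : V => Odd (G.degree v)).card := by
  classical
  have hnd : ((L.map block).flatten : List (Sym2 (V ⊕ Unit))).Nodup := by
    rw [← hL]; exact hW.isTrail.edges_nodup
  have hbnd : ∀ t ∈ L, (block t).Nodup := by
    intro t ht
    exact (List.nodup_flatten.mp hnd).1 _ (List.mem_map_of_mem ht)
  refine ⟨?_, ?_, ?_, ?_⟩
  · intro t ht
    have hb := hbnd t ht
    rw [block, List.nodup_cons, List.nodup_append] at hb
    constructor
    · rw [isTrail_def]
      exact (hb.2.1).of_map _
    · intro heq
      apply hb.1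
      rw [List.mem_append, List.mem_singleton]
      exact Or.inr (Sym2.eq_iff.mpr (Or.inr ⟨rfl, congrArg Sum.inl heq⟩))
  · intro e he
    have h1 : (W.edges.count (Sym2.map Sum.inl e)) = 1 := hW _ (map_inl_mem_edgeSet he)
    rw [hL, List.count_flatten, List.map_map] at h1
    rw [← h1]
    congr 1
    apply List.map_congr_left
    intro t ht
    simp only [Function.comp_apply, block]
    have hne1 : Sym2.map Sum.inl e ≠ s(Sum.inr (), Sum.inl t.1) := by
      intro hc
      exact inr_not_mem_map_inl e (by rw [hc]; simp)
    have hne2 : Sym2.map Sum.inl e ≠ s(Sum.inl t.2.1, Sum.inr ()) := by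
      intro hc
      exact inr_not_mem_map_inl e (by rw [hc]; simp)
    symm
    rw [List.count_cons_of_ne hne1.symm, List.count_append,
      List.count_map_of_injective _ _ (Sym2.map.injective Sum.inl_injective)]
    simp [hne2, List.count_eq_zero]
  · intro v hv
    have h1 : s(Sum.inr (), Sum.inl v) ∈ W.edges := hW.mem_edges_iff.mpr (by simpa using hv)
    rw [hL, List.mem_flatten] at h1
    obtain ⟨bl, hbl, hmem⟩ := h1
    obtain ⟨t, ht, rfl⟩ := List.mem_map.mp hbl
    refine ⟨t, ht, ?_⟩
    rw [block, List.mem_cons, List.mem_append, List.mem_singleton] at hmem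
    rcases hmem with h | h | h
    · left
      have := Sym2.eq_iff.mp h
      rcases this with ⟨-, h2⟩ | ⟨h2, -⟩
      · exact (Sum.inl_injective h2).symm
      · exact absurd h2 (by simp)
    · exact absurd (List.mem_map.mp h) (by rintro ⟨a, -, hc⟩; exact inr_not_mem_map_inl a (by rw [hc]; simp))
    · right
      rcases Sym2.eq_iff.mp h with ⟨h2, -⟩ | ⟨-, h2⟩
      · exact absurd h2 (by simp)
      · exact (Sum.inl_injective h2).symm
  · have h1 : (W.edges.countP fun e => (Sum.inr () : V ⊕ Unit) ∈ e)
        = (univ.filter fun v : V => Odd (G.degree v)).card := by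
      rw [eulerian_countP hW, G2_degree_z]
    rw [hL, List.countP_flatten, List.map_map] at h1
    rw [← h1]
    have : ∀ t ∈ L, ((List.countP (fun e => decide ((Sum.inr () : V ⊕ Unit) ∈ e))) ∘ block) t = 2 := by
      intro t ht
      simp only [Function.comp_apply, block, List.countP_cons, List.countP_append,
        List.countP_singleton]
      have hmid : (t.2.2.edges.map (Sym2.map Sum.inl)).countP
          (fun e => decide ((Sum.inr () : V ⊕ Unit) ∈ e)) = 0 := by
        rw [List.countP_eq_zero]
        intro a ha
        obtain ⟨b, -, rfl⟩ := List.mem_map.mp ha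
        simpa using inr_not_mem_map_inl b
      rw [hmid]
      simp
    rw [List.map_congr_left this]
    simp [mul_comm]
theorem fix_cross {k : ℕ} (X : Set V) (hconn : G.Connected)
    (f : Fin k → Σ u : V, Σ v : V, G.Walk u v)
    (hP1 : ∀ i, (f i).2.2.IsTrail)
    (hP2 : ∀ i, (f i).1 ≠ (f i).2.1)
    (hP3 : ∀ e ∈ G.edgeSet, ∃! i, e ∈ (f i).2.2.edges)
    (hoX : ∃ v ∈ X, Odd (G.degree v)) (hoY : ∃ v, v ∉ X ∧ Odd (G.degree v))
    (hP4 : ∀ v : V, Odd (G.degree v) → ∃ i, (f i).1 = v ∨ (f i).2.1 = v) :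
    ∃ g : Fin k → Σ u : V, Σ v : V, G.Walk u v,
      (∀ i, (g i).2.2.IsTrail ∧ (g i).1 ≠ (g i).2.1) ∧
      (∀ e ∈ G.edgeSet, ∃! i, e ∈ (g i).2.2.edges) ∧
      (∃ i, ((g i).1 ∈ X ∧ (g i).2.1 ∉ X) ∨ ((g i).1 ∉ X ∧ (g i).2.1 ∈ X)) := by
  classical
  by_cases hcross : ∃ i, ((f i).1 ∈ X ∧ (f i).2.1 ∉ X) ∨ ((f i).1 ∉ X ∧ (f i).2.1 ∈ X)
  · exact ⟨f, fun i => ⟨hP1 i, hP2 i⟩, hP3, hcross⟩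
  push_neg at hcross
  have hsame : ∀ i, ((f i).1 ∈ X ↔ (f i).2.1 ∈ X) := by
    intro i
    have := hcross i
    tauto
  obtain ⟨x0, hx0X, hx0odd⟩ := hoX
  obtain ⟨y0, hy0X, hy0odd⟩ := hoY
  obtain ⟨i0, hi0⟩ := hP4 x0 hx0odd
  obtain ⟨j0, hj0⟩ := hP4 y0 hy0odd
  have hi0X : (f i0).1 ∈ X := by
    rcases hi0 with h | h
    · rwa [h]
    · exact (hsame i0).mpr (h ▸ hx0X)
  have hj0Y : (f j0).1 ∉ X := by
    rcases hj0 with h | h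
    · rwa [h]
    · exact fun hc => hy0X (h ▸ (hsame j0).mp hc)
  by_cases hshare : ∃ (i j : Fin k) (v : V), (f i).1 ∈ X ∧ (f j).1 ∉ X ∧
      v ∈ (f i).2.2.support ∧ v ∈ (f j).2.2.support
  · -- merge and re-split
    obtain ⟨i, j, v, hiX, hjY, hvi, hvj⟩ := hshare
    have hij : i ≠ j := fun h => hjY (h ▸ hiX)
    set p := (f i).2.2 with hp_def
    set q := (f j).2.2 with hq_def
    have hp := hP1 i
    have hq := hP1 j
    have hpe : p.edges = (p.takeUntil v hvi).edges ++ (p.dropUntil v hvi).edges := by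
      conv_lhs => rw [← take_spec p hvi]
      rw [edges_append]
    have hqe : q.edges = (q.takeUntil v hvj).edges ++ (q.dropUntil v hvj).edges := by
      conv_lhs => rw [← take_spec q hvj]
      rw [edges_append]
    have hpnd : p.edges.Nodup := hp.edges_nodup
    have hqnd : q.edges.Nodup := hq.edges_nodup
    have hdisjpq : ∀ e, e ∈ p.edges → e ∈ q.edges → False := by
      intro e hep heq
      obtain ⟨w, -, huni⟩ := hP3 e (p.edges_subset_edgeSet hep)
      exact hij ((huni i hep).trans (huni j heq).symm)
    set newi : Σ u : V, Σ v : V, G.Walk u v :=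
      ⟨(f i).1, (f j).2.1, (p.takeUntil v hvi).append (q.dropUntil v hvj)⟩ with hnewi
    set newj : Σ u : V, Σ v : V, G.Walk u v :=
      ⟨(f j).1, (f i).2.1, (q.takeUntil v hvj).append (p.dropUntil v hvi)⟩ with hnewj
    set g := Function.update (Function.update f i newi) j newj with hg
    have hgi : g i = newi := by
      rw [hg, Function.update_of_ne hij, Function.update_self]
    have hgj : g j = newj := by
      rw [hg, Function.update_self]
    have hgl : ∀ l, l ≠ i → l ≠ j → g l = f l := by
      intro l hli hlj
      rw [hg, Function.update_of_ne hlj, Function.update_of_ne hli]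
    have hp1nd : (p.takeUntil v hvi).edges.Nodup := (List.nodup_append.mp (hpe ▸ hpnd)).1
    have hp2nd : (p.dropUntil v hvi).edges.Nodup := (List.nodup_append.mp (hpe ▸ hpnd)).2.1
    have hq1nd : (q.takeUntil v hvj).edges.Nodup := (List.nodup_append.mp (hqe ▸ hqnd)).1
    have hq2nd : (q.dropUntil v hvj).edges.Nodup := (List.nodup_append.mp (hqe ▸ hqnd)).2.1
    have hp12 : ∀ e, e ∈ (p.takeUntil v hvi).edges → e ∈ (p.dropUntil v hvi).edges → False := by
      intro e h1 h2
      exact (List.nodup_append'.mp (hpe ▸ hpnd)).2.2 h1 h2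
    have hq12 : ∀ e, e ∈ (q.takeUntil v hvj).edges → e ∈ (q.dropUntil v hvj).edges → False := by
      intro e h1 h2
      exact (List.nodup_append'.mp (hqe ▸ hqnd)).2.2 h1 h2
    have hsubp1 : ∀ e, e ∈ (p.takeUntil v hvi).edges → e ∈ p.edges := by
      intro e h; rw [hpe]; exact List.mem_append_left _ h
    have hsubp2 : ∀ e, e ∈ (p.dropUntil v hvi).edges → e ∈ p.edges := by
      intro e h; rw [hpe]; exact List.mem_append_right _ h
    have hsubq1 : ∀ e, e ∈ (q.takeUntil v hvj).edges → e ∈ q.edges := by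
      intro e h; rw [hqe]; exact List.mem_append_left _ h
    have hsubq2 : ∀ e, e ∈ (q.dropUntil v hvj).edges → e ∈ q.edges := by
      intro e h; rw [hqe]; exact List.mem_append_right _ h
    have hj2Y : (f j).2.1 ∉ X := fun hc => hjY ((hsame j).mpr hc)
    have hi2X : (f i).2.1 ∈ X := (hsame i).mp hiX
    refine ⟨g, ?_, ?_, ?_⟩
    · intro l
      rcases eq_or_ne l i with hli | hli
      · rw [hli, hgi, hnewi]
        refine ⟨?_, fun hc => hj2Y (hc ▸ hiX)⟩
        rw [isTrail_def, edges_append, List.nodup_append]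
        exact ⟨hp1nd, hq2nd, fun e h1 b h2 heq => hdisjpq e (hsubp1 e h1) (hsubq2 e (by rw [heq]; exact h2))⟩
      rcases eq_or_ne l j with hlj | hlj
      · rw [hlj, hgj, hnewj]
        refine ⟨?_, fun hc => hjY (by rw [hc]; exact hi2X)⟩
        rw [isTrail_def, edges_append, List.nodup_append]
        exact ⟨hq1nd, hp2nd, fun e h1 b h2 heq => hdisjpq b (hsubp2 b h2) (hsubq1 b (by rw [← heq]; exact h1))⟩
      · rw [hgl l hli hlj]
        exact ⟨hP1 l, hP2 l⟩
    · intro e he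
      obtain ⟨w, hw, huni⟩ := hP3 e he
      have hginotj : ∀ l, l ≠ i → l ≠ j → e ∈ (g l).2.2.edges → e ∈ (f l).2.2.edges := by
        intro l hli hlj hmem
        rwa [hgl l hli hlj] at hmem
      have hmemi : e ∈ (g i).2.2.edges ↔
          (e ∈ (p.takeUntil v hvi).edges ∨ e ∈ (q.dropUntil v hvj).edges) := by
        rw [hgi, hnewi]
        simp [edges_append]
      have hmemj : e ∈ (g j).2.2.edges ↔
          (e ∈ (q.takeUntil v hvj).edges ∨ e ∈ (p.dropUntil v hvi).edges) := by
        rw [hgj, hnewj]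
        simp [edges_append]
      have huniq : ∀ l, e ∈ (f l).2.2.edges → l = w := fun l h => huni l h
      rcases eq_or_ne w i with hwi | hwi
      · have hunii : ∀ l, e ∈ (f l).2.2.edges → l = i := fun l h => (huniq l h).trans hwi
        have hep : e ∈ p.edges := by rw [hp_def, ← hwi]; exact hw
        rw [hpe, List.mem_append] at hep
        rcases hep with h1 | h2
        · refine ⟨i, hmemi.mpr (Or.inl h1), fun l hl => ?_⟩
          show l = i
          rcases eq_or_ne l i with rfl | hli
          · rfl
          rcases eq_or_ne l j with rfl | hlj
          · exfalso
            rcases hmemj.mp hl with hc | hc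
            · exact hij (hunii l (hsubq1 e hc)).symm
            · exact hp12 e h1 hc
          · exact hunii l (hginotj l hli hlj hl)
        · refine ⟨j, hmemj.mpr (Or.inr h2), fun l hl => ?_⟩
          show l = j
          rcases eq_or_ne l j with rfl | hlj
          · rfl
          rcases eq_or_ne l i with rfl | hli
          · exfalso
            rcases hmemi.mp hl with hc | hc
            · exact hp12 e hc h2
            · exact hdisjpq e (hsubp2 e h2) (hsubq2 e hc)
          · exact absurd (hunii l (hginotj l hli hlj hl)) hli
      rcases eq_or_ne w j with hwj | hwj
      · have hunij : ∀ l, e ∈ (f l).2.2.edges → l = j := fun l h => (huniq l h).trans hwj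
        have heq : e ∈ q.edges := by rw [hq_def, ← hwj]; exact hw
        rw [hqe, List.mem_append] at heq
        rcases heq with h1 | h2
        · refine ⟨j, hmemj.mpr (Or.inl h1), fun l hl => ?_⟩
          show l = j
          rcases eq_or_ne l j with rfl | hlj
          · rfl
          rcases eq_or_ne l i with rfl | hli
          · exfalso
            rcases hmemi.mp hl with hc | hc
            · exact hij (hunij l (hsubp1 e hc))
            · exact hq12 e h1 hc
          · exact hunij l (hginotj l hli hlj hl)
        · refine ⟨i, hmemi.mpr (Or.inr h2), fun l hl => ?_⟩
          show l = i
          rcases eq_or_ne l i with rfl | hli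
          · rfl
          rcases eq_or_ne l j with rfl | hlj
          · exfalso
            rcases hmemj.mp hl with hc | hc
            · exact hq12 e hc h2
            · exact hdisjpq e (hsubp2 e hc) (hsubq2 e h2)
          · exact absurd (hunij l (hginotj l hli hlj hl)) hlj
      · refine ⟨w, ?_, fun l hl => ?_⟩
        · show e ∈ (g w).2.2.edges
          rw [hgl w hwi hwj]
          exact hw
        show l = w
        rcases eq_or_ne l i with rfl | hli
        · exfalso
          rcases hmemi.mp hl with hc | hc
          · exact hwi (huniq l (hsubp1 e hc)).symm
          · exact hwj (huniq j (hsubq2 e hc)).symm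
        rcases eq_or_ne l j with rfl | hlj
        · exfalso
          rcases hmemj.mp hl with hc | hc
          · exact hwj (huniq l (hsubq1 e hc)).symm
          · exact hwi (huniq i (hsubp2 e hc)).symm
        · exact huniq l (hginotj l hli hlj hl)
    · refine ⟨i, Or.inl ⟨?_, ?_⟩⟩
      · rw [hgi]; exact hiX
      · rw [hgi]; exact hj2Y
  · -- no sharing: contradiction with connectivity
    exfalso
    push_neg at hshare
    set A : Set V := {v | ∃ i, (f i).1 ∈ X ∧ v ∈ (f i).2.2.support} with hA
    have hstep : ∀ a b : V, G.Adj a b → a ∈ A → b ∈ A := by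
      intro a b hab haA
      obtain ⟨i, hiX, hasup⟩ := haA
      obtain ⟨l, hl, -⟩ := hP3 s(a, b) (G.mem_edgeSet.mpr hab)
      have hasupl : a ∈ (f l).2.2.support := fst_mem_support_of_mem_edges _ hl
      have hbsupl : b ∈ (f l).2.2.support := snd_mem_support_of_mem_edges _ hl
      by_cases hlX : (f l).1 ∈ X
      · exact ⟨l, hlX, hbsupl⟩
      · exact absurd hasupl (hshare i l a hiX hlX hasup)
    have hwalk : ∀ (a b : V) (w : G.Walk a b), a ∈ A → b ∈ A := by
      intro a b w
      induction w with
      | nil => exact id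
      | cons h q ih => exact fun ha => ih (hstep _ _ h ha)
    have hx0A : x0 ∈ A := by
      refine ⟨i0, hi0X, ?_⟩
      rcases hi0 with h | h
      · exact h ▸ start_mem_support _
      · exact h ▸ end_mem_support _
    have hy0A : y0 ∈ A := hwalk x0 y0 (hconn x0 y0).some hx0A
    obtain ⟨i, hiX, hy0sup⟩ := hy0A
    have hy0supj : y0 ∈ (f j0).2.2.support := by
      rcases hj0 with h | h
      · exact h ▸ start_mem_support _
      · exact h ▸ end_mem_support _
    exact hshare i j0 y0 hiX hj0Y hy0sup hy0supj

theorem sum_map_one_unique {α : Type*} (L : List α) (f : α → ℕ) (h : (L.map f).sum = 1) :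
    ∃! i : Fin L.length, f (L.get i) ≠ 0 := by
  obtain ⟨i, hi, huni⟩ := sum_one_unique h
  have hlen : (L.map f).length = L.length := List.length_map _
  have hval : ∀ j : Fin (L.map f).length, (L.map f).get j = f (L.get (Fin.cast hlen j)) := by
    intro j
    simp
  refine ⟨Fin.cast hlen i, ?_, fun y hy => ?_⟩
  · show f (L.get (Fin.cast hlen i)) ≠ 0
    rw [← hval]
    exact hi
  · have hy' : f (L.get y) ≠ 0 := hy
    have h2 : (List.map f L).get (Fin.cast hlen.symm y) ≠ 0 := by
      rw [hval]
      exact hy'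
    have := huni (Fin.cast hlen.symm y) h2
    show y = Fin.cast hlen i
    rw [← this]
    rfl

end Aux
end EulerAux

open SimpleGraph Walk Finset EulerAux in
/-- Let `G` be a connected bipartite graph with parts `X` and `Xᶜ` that has at least one
odd-degree vertex in `X` and at least one odd-degree vertex in `Xᶜ`, and let `V_odd` be
the set of odd-degree vertices of `G`. Then the edge set of `G` decomposes into exactly
`|V_odd| / 2` open trails, at least one of which is an `XY`-trail, i.e. an open trail
with one endpoint in `X` and the other endpoint in `Xᶜ`. -/
theorem connected_bipartite_decomposes_with_XY_trail
    {V : Type*} [Fintype V] (G : SimpleGraph V) [DecidableRel G.Adj]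
    (X : Set V)
    (hbip : ∀ ⦃v w : V⦄, G.Adj v w → (v ∈ X ↔ w ∉ X))
    (hconn : G.Connected)
    (hoX : ∃ v ∈ X, Odd (G.degree v))
    (hoY : ∃ v, v ∉ X ∧ Odd (G.degree v)) :
    ∃ trails : Fin ((Finset.univ.filter fun v : V => Odd (G.degree v)).card / 2) →
        (u : V) × (v : V) × G.Walk u v,
      (∀ i, (trails i).2.2.IsTrail ∧ (trails i).1 ≠ (trails i).2.1) ∧
      (∀ e ∈ G.edgeSet, ∃! i, e ∈ (trails i).2.2.edges) ∧
      (∃ i, ((trails i).1 ∈ X ∧ (trails i).2.1 ∉ X) ∨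
            ((trails i).1 ∉ X ∧ (trails i).2.1 ∈ X)) := by
  classical
  obtain ⟨v0, hv0X, hv0odd⟩ := hoX
  have hev : ∀ v : V ⊕ Unit, Even ((G2 G).degree v) := G2_even_degree
  have hpre : (G2 G).Preconnected := G2_preconnected hconn v0 hv0odd
  obtain ⟨u, c, hc⟩ := euler_exists hev hpre
  have he0 : s(Sum.inr (), Sum.inl v0) ∈ c.edges := hc.mem_edges_iff.mpr (by simpa using hv0odd)
  have hz : (Sum.inr () : V ⊕ Unit) ∈ c.support := c.fst_mem_support_of_mem_edges he0
  set W := c.rotate _ hz with hWdef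
  have hW : W.IsEulerian := fun e he => by
    rw [(c.rotate_edges _ hz).perm.count_eq]
    exact hc e he
  obtain ⟨L, hL⟩ := splitZ W.length W le_rfl
  obtain ⟨hA, hB, hC, hD⟩ := segments_spec hW hL
  set f : Fin L.length → (u : V) × (v : V) × G.Walk u v := fun i => L.get i with hf
  have hP1 : ∀ i, (f i).2.2.IsTrail := fun i => (hA _ (L.get_mem i)).1
  have hP2 : ∀ i, (f i).1 ≠ (f i).2.1 := fun i => (hA _ (L.get_mem i)).2
  have hP3 : ∀ e ∈ G.edgeSet, ∃! i, e ∈ (f i).2.2.edges := by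
    intro e he
    obtain ⟨i, hi, huni⟩ := sum_map_one_unique L (fun t => t.2.2.edges.count e) (hB e he)
    refine ⟨i, ?_, fun y hy => huni y ?_⟩
    · have : (f i).2.2.edges.count e ≠ 0 := hi
      exact List.count_pos_iff.mp (Nat.pos_of_ne_zero this)
    · exact fun hzero => (List.count_eq_zero.mp hzero) hy
  have hP4 : ∀ v : V, Odd (G.degree v) → ∃ i, (f i).1 = v ∨ (f i).2.1 = v := by
    intro v hv
    obtain ⟨t, htL, hprop⟩ := hC v hv
    obtain ⟨i, rfl⟩ := List.mem_iff_get.mp htL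
    exact ⟨i, hprop⟩
  obtain ⟨g, hg1, hg2, hg3⟩ := fix_cross X hconn f hP1 hP2 hP3 ⟨v0, hv0X, hv0odd⟩ hoY hP4
  have hk : (Finset.univ.filter fun v : V => Odd (G.degree v)).card / 2 = L.length := by
    omega
  refine ⟨fun i => g (Fin.cast hk i), fun i => hg1 _, ?_, ?_⟩
  · intro e he
    obtain ⟨i, hi, huni⟩ := hg2 e he
    refine ⟨Fin.cast hk.symm i, by simpa using hi, fun y hy => ?_⟩
    have := huni (Fin.cast hk y) hy
    rw [← this]
    rfl
  · obtain ⟨i, hi⟩ := hg3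
    exact ⟨Fin.cast hk.symm i, by simpa using hi⟩
end

section
/- Let G be a connected graph containing a vertex v that is incident to at least three edges that are not cut edges of G. Then there exist two edges e1, e2 incident to v such that the graph G − {e1, e2}, obtained by deleting e1 and e2, is connected. -/
open SimpleGraph

/-- If `x` is reachable from `y` in `G`, then after deleting the edge `s(u,w)`,
`x` reaches `y`, or `x` reaches `u`, or `x` reaches `w`. -/
private lemma reach_delete_edge {V : Type*} {G : SimpleGraph V} {u w x y : V}
    (h : G.Reachable x y) :
    (G.deleteEdges {s(u, w)}).Reachable x y ∨
    (G.deleteEdges {s(u, w)}).Reachable x u ∨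
    (G.deleteEdges {s(u, w)}).Reachable x w := by
  obtain ⟨p⟩ := h
  induction p with
  | nil => exact Or.inl (Reachable.refl _)
  | @cons a b c hadj p ih =>
    by_cases he : s(a, b) = s(u, w)
    · rw [Sym2.eq_iff] at he
      rcases he with ⟨ha, _⟩ | ⟨ha, _⟩
      · exact Or.inr (Or.inl (ha ▸ Reachable.refl _))
      · exact Or.inr (Or.inr (ha ▸ Reachable.refl _))
    · have hadj' : (G.deleteEdges {s(u, w)}).Adj a b := by
        rw [deleteEdges_adj]
        exact ⟨hadj, by simpa using he⟩
      rcases ih with h' | h' | h'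
      · exact Or.inl (hadj'.reachable.trans h')
      · exact Or.inr (Or.inl (hadj'.reachable.trans h'))
      · exact Or.inr (Or.inr (hadj'.reachable.trans h'))

/-- Let `G` be a connected graph containing a vertex `v` incident to at least three
edges that are not cut edges (bridges) of `G`. Then there exist two edges `e₁, e₂`
incident to `v` such that the graph obtained from `G` by deleting `e₁` and `e₂` is
connected. -/
theorem exists_two_edges_delete_connected
    {V : Type*} [Fintype V] (G : SimpleGraph V)
    (hconn : G.Connected) (v : V)
    (h : ∃ e₁ e₂ e₃ : Sym2 V, e₁ ≠ e₂ ∧ e₁ ≠ e₃ ∧ e₂ ≠ e₃ ∧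
      e₁ ∈ G.incidenceSet v ∧ e₂ ∈ G.incidenceSet v ∧ e₃ ∈ G.incidenceSet v ∧
      ¬ G.IsBridge e₁ ∧ ¬ G.IsBridge e₂ ∧ ¬ G.IsBridge e₃) :
    ∃ e₁ e₂ : Sym2 V, e₁ ≠ e₂ ∧
      e₁ ∈ G.incidenceSet v ∧ e₂ ∈ G.incidenceSet v ∧
      (G.deleteEdges {e₁, e₂}).Connected := by
  obtain ⟨e₁, e₂, e₃, h12, h13, h23, hi1, hi2, hi3, hb1, hb2, hb3⟩ := h
  -- write each edge as s(v, x)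
  obtain ⟨a, rfl⟩ : ∃ a, e₁ = s(v, a) := by
    obtain ⟨-, hv⟩ := hi1
    induction e₁ with
    | _ x y =>
      rcases Sym2.mem_iff.mp hv with rfl | rfl
      · exact ⟨y, rfl⟩
      · exact ⟨x, Sym2.eq_swap⟩
  obtain ⟨b, rfl⟩ : ∃ b, e₂ = s(v, b) := by
    obtain ⟨-, hv⟩ := hi2
    induction e₂ with
    | _ x y =>
      rcases Sym2.mem_iff.mp hv with rfl | rfl
      · exact ⟨y, rfl⟩
      · exact ⟨x, Sym2.eq_swap⟩
  obtain ⟨c, rfl⟩ : ∃ c, e₃ = s(v, c) := by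
    obtain ⟨-, hv⟩ := hi3
    induction e₃ with
    | _ x y =>
      rcases Sym2.mem_iff.mp hv with rfl | rfl
      · exact ⟨y, rfl⟩
      · exact ⟨x, Sym2.eq_swap⟩
  have hadjva : G.Adj v a := (mk'_mem_incidenceSet_left_iff G).mp hi1
  have hadjvb : G.Adj v b := (mk'_mem_incidenceSet_left_iff G).mp hi2
  have hadjvc : G.Adj v c := (mk'_mem_incidenceSet_left_iff G).mp hi3
  -- Non-bridge means endpoints still reachable after deleting the edge.
  have hrva : (G.deleteEdges {s(v, a)}).Reachable v a := by
    by_contra hr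
    exact hb1 (isBridge_iff.mpr hr)
  have hrvb : (G.deleteEdges {s(v, b)}).Reachable v b := by
    by_contra hr
    exact hb2 (isBridge_iff.mpr hr)
  -- everything reaches v in G minus one of the edges
  have hall1 : ∀ x, (G.deleteEdges {s(v, a)}).Reachable x v := by
    intro x
    rcases reach_delete_edge (u := v) (w := a) (hconn.preconnected x v) with h' | h' | h'
    · exact h'
    · exact h'
    · exact h'.trans hrva.symm
  have hall2 : ∀ x, (G.deleteEdges {s(v, b)}).Reachable x v := by
    intro x
    rcases reach_delete_edge (u := v) (w := b) (hconn.preconnected x v) with h' | h' | h'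
    · exact h'
    · exact h'
    · exact h'.trans hrvb.symm
  -- reaching `v` everywhere gives connectivity
  have conn_of_all : ∀ (H : SimpleGraph V), (∀ x, H.Reachable x v) → H.Connected := by
    intro H hH
    have : Nonempty V := ⟨v⟩
    exact ⟨fun x y => (hH x).trans (hH y).symm⟩
  have hdd : ∀ (s t : Set (Sym2 V)),
      (G.deleteEdges s).deleteEdges t = G.deleteEdges (s ∪ t) := by
    intro s t
    ext x y
    simp only [deleteEdges_adj, Set.mem_union]
    tauto
  -- In G - {e₁, eⱼ}, every vertex reaches v or the other endpoint of eⱼ.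
  have key12 : ∀ x, (G.deleteEdges {s(v, a), s(v, b)}).Reachable x v ∨
      (G.deleteEdges {s(v, a), s(v, b)}).Reachable x b := by
    intro x
    have := reach_delete_edge (u := v) (w := b) (hall1 x)
    rw [hdd] at this
    simp only [Set.singleton_union] at this
    rcases this with h' | h' | h'
    · exact Or.inl h'
    · exact Or.inl h'
    · exact Or.inr h'
  have key12' : ∀ x, (G.deleteEdges {s(v, a), s(v, b)}).Reachable x v ∨
      (G.deleteEdges {s(v, a), s(v, b)}).Reachable x a := by
    intro x
    have := reach_delete_edge (u := v) (w := a) (hall2 x)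
    rw [hdd] at this
    have h2 : ({s(v, b)} ∪ {s(v, a)} : Set (Sym2 V)) = {s(v, a), s(v, b)} := by
      ext e; simp [or_comm]
    rw [h2] at this
    rcases this with h' | h' | h'
    · exact Or.inl h'
    · exact Or.inl h'
    · exact Or.inr h'
  have key13 : ∀ x, (G.deleteEdges {s(v, a), s(v, c)}).Reachable x v ∨
      (G.deleteEdges {s(v, a), s(v, c)}).Reachable x c := by
    intro x
    have := reach_delete_edge (u := v) (w := c) (hall1 x)
    rw [hdd] at this
    simp only [Set.singleton_union] at this
    rcases this with h' | h' | h'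
    · exact Or.inl h'
    · exact Or.inl h'
    · exact Or.inr h'
  by_cases hc12 : (G.deleteEdges {s(v, a), s(v, b)}).Connected
  · exact ⟨s(v, a), s(v, b), h12, hi1, hi2, hc12⟩
  by_cases hc13 : (G.deleteEdges {s(v, a), s(v, c)}).Connected
  · exact ⟨s(v, a), s(v, c), h13, hi1, hi3, hc13⟩
  exfalso
  -- v does not reach a in either deleted graph
  have hva12 : ¬ (G.deleteEdges {s(v, a), s(v, b)}).Reachable v a := by
    intro hr
    apply hc12
    apply conn_of_all
    intro x
    rcases key12' x with h' | h'
    · exact h'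
    · exact h'.trans hr.symm
  have hrvc : (G.deleteEdges {s(v, c)}).Reachable v c := by
    by_contra hr
    exact hb3 (isBridge_iff.mpr hr)
  have hall3 : ∀ x, (G.deleteEdges {s(v, c)}).Reachable x v := by
    intro x
    rcases reach_delete_edge (u := v) (w := c) (hconn.preconnected x v) with h' | h' | h'
    · exact h'
    · exact h'
    · exact h'.trans hrvc.symm
  have key13' : ∀ x, (G.deleteEdges {s(v, a), s(v, c)}).Reachable x v ∨
      (G.deleteEdges {s(v, a), s(v, c)}).Reachable x a := by
    intro x
    have := reach_delete_edge (u := v) (w := a) (hall3 x)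
    rw [hdd] at this
    have h2 : ({s(v, c)} ∪ {s(v, a)} : Set (Sym2 V)) = {s(v, a), s(v, c)} := by
      ext e; simp [or_comm]
    rw [h2] at this
    rcases this with h' | h' | h'
    · exact Or.inl h'
    · exact Or.inl h'
    · exact Or.inr h'
  have hva13 : ¬ (G.deleteEdges {s(v, a), s(v, c)}).Reachable v a := by
    intro hr
    apply hc13
    apply conn_of_all
    intro x
    rcases key13' x with h' | h'
    · exact h'
    · exact h'.trans hr.symm
  -- hence a reaches b in G - {e₁, e₂}
  have hab : (G.deleteEdges {s(v, a), s(v, b)}).Reachable a b := by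
    rcases key12 a with h' | h'
    · exact absurd h'.symm hva12
    · exact h'
  -- monotonicity helper
  have hmono : ∀ (s t : Set (Sym2 V)), s ⊆ t → G.deleteEdges t ≤ G.deleteEdges s := by
    intro s t hst x y hxy
    rw [deleteEdges_adj] at hxy ⊢
    exact ⟨hxy.1, fun hmem => hxy.2 (hst hmem)⟩
  -- delete also e₃ from the walk a → b
  have := reach_delete_edge (u := v) (w := c) hab
  rw [hdd] at this
  have h3 : ({s(v, a), s(v, b)} ∪ {s(v, c)} : Set (Sym2 V)) =
      {s(v, a), s(v, b), s(v, c)} := by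
    ext e; simp; tauto
  rw [h3] at this
  rcases this with h' | h' | h'
  · -- a reaches b avoiding all three edges; then in G - {e₁, e₃}, a reaches b,
    -- and b is adjacent to v there, contradicting hva13
    have hab13 : (G.deleteEdges {s(v, a), s(v, c)}).Reachable a b :=
      h'.mono (hmono _ _ (by intro e he; simp at he ⊢; tauto))
    have hbv : (G.deleteEdges {s(v, a), s(v, c)}).Adj v b := by
      rw [deleteEdges_adj]
      refine ⟨hadjvb, ?_⟩
      intro hmem
      rcases hmem with hmem | hmem
      · exact h12 hmem.symm
      · exact h23 (hmem.symm ▸ rfl)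
    exact hva13 (hbv.reachable.trans hab13.symm)
  · -- a reaches v avoiding all three edges: contradicts hva12
    have : (G.deleteEdges {s(v, a), s(v, b)}).Reachable a v :=
      h'.mono (hmono _ _ (by intro e he; simp at he ⊢; tauto))
    exact hva12 this.symm
  · -- a reaches c avoiding all three edges; c is adjacent to v in G - {e₁, e₂}
    have hac12 : (G.deleteEdges {s(v, a), s(v, b)}).Reachable a c :=
      h'.mono (hmono _ _ (by intro e he; simp at he ⊢; tauto))
    have hcv : (G.deleteEdges {s(v, a), s(v, b)}).Adj v c := by
      rw [deleteEdges_adj]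
      refine ⟨hadjvc, ?_⟩
      intro hmem
      rcases hmem with hmem | hmem
      · exact h13 hmem.symm
      · exact h23 hmem.symm
    exact hva12 (hcv.reachable.trans hac12.symm)
end

section
/- Let p be a nonnegative integer divisible by 3 and let k be an odd positive integer. Then the 2k-element set J = {p+3i−2, p+3i−1 : i ∈ [1,k]} can be partitioned into k pairs such that the multiset of pair sums is exactly the set {2p + 3(k−1)/2 + 3i : i ∈ [1,k]} of k consecutive multiples of 3. -/
private def Fa (k t : ℕ) : ℕ := if t % 2 = 0 then t / 2 else (t + k) / 2
private def Gb (k t : ℕ) : ℕ := if t % 2 = 0 then t / 2 + (k - 1) / 2 else (t - 1) / 2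

private lemma Fa_add_Gb {k t : ℕ} (hk : k % 2 = 1) (ht : t < k) :
    Fa k t + Gb k t = t + (k - 1) / 2 := by
  unfold Fa Gb; by_cases h : t % 2 = 0 <;> simp [h] <;> omega

private lemma Fa_lt {k t : ℕ} (hk : k % 2 = 1) (ht : t < k) : Fa k t < k := by
  unfold Fa; by_cases h : t % 2 = 0 <;> simp [h] <;> omega

private lemma Gb_lt {k t : ℕ} (hk : k % 2 = 1) (ht : t < k) : Gb k t < k := by
  unfold Gb; by_cases h : t % 2 = 0 <;> simp [h] <;> omega

private lemma Fa_inj {k t₁ t₂ : ℕ} (hk : k % 2 = 1) (h₁ : t₁ < k) (h₂ : t₂ < k)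
    (h : Fa k t₁ = Fa k t₂) : t₁ = t₂ := by
  unfold Fa at h
  by_cases e₁ : t₁ % 2 = 0 <;> by_cases e₂ : t₂ % 2 = 0 <;> simp [e₁, e₂] at h <;> omega

private lemma Gb_inj {k t₁ t₂ : ℕ} (hk : k % 2 = 1) (h₁ : t₁ < k) (h₂ : t₂ < k)
    (h : Gb k t₁ = Gb k t₂) : t₁ = t₂ := by
  unfold Gb at h
  by_cases e₁ : t₁ % 2 = 0 <;> by_cases e₂ : t₂ % 2 = 0 <;> simp [e₁, e₂] at h <;> omega

private lemma Fa_surj {k s : ℕ} (hk : k % 2 = 1) (hs : s < k) :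
    ∃ t < k, Fa k t = s := by
  by_cases h : s ≤ (k - 1) / 2
  · exact ⟨2 * s, by omega, by unfold Fa; rw [if_pos (by omega)]; omega⟩
  · refine ⟨2 * s - k, by omega, ?_⟩
    unfold Fa
    rw [if_neg (by omega)]; omega

private lemma Gb_surj {k s : ℕ} (hk : k % 2 = 1) (hs : s < k) :
    ∃ t < k, Gb k t = s := by
  by_cases h : s < (k - 1) / 2
  · refine ⟨2 * s + 1, by omega, ?_⟩
    unfold Gb
    rw [if_neg (by omega)]; omega
  · exact ⟨2 * (s - (k - 1) / 2), by omega, by unfold Gb; rw [if_pos (by omega)]; omega⟩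

/-- Let `p` be a nonnegative multiple of 3 and `k` an odd positive integer. The
`2k`-element set `J = {p+3i−2, p+3i−1 : i ∈ [1,k]}` can be partitioned into `k` pairs
`{a i, b i}` whose pair sums are exactly the `k` consecutive multiples of 3 in
`{2p + 3(k−1)/2 + 3i : i ∈ [1,k]}`. -/
theorem pairing_J_odd (p k : ℕ) (hp : 3 ∣ p) (hk : Odd k) (hk0 : 0 < k) :
    ∃ a b : Fin k → ℕ,
      Function.Injective (Sum.elim a b) ∧
      Set.range (Sum.elim a b) =
        ↑((Finset.Icc 1 k).biUnion fun i => {p + 3 * i - 2, p + 3 * i - 1}) ∧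
      ∀ i : Fin k, a i + b i = 2 * p + 3 * ((k - 1) / 2) + 3 * (i.val + 1) := by
  have hk1 : k % 2 = 1 := Nat.odd_iff.mp hk
  refine ⟨fun i => p + 3 * Fa k i.val + 1, fun i => p + 3 * Gb k i.val + 2, ?_, ?_, ?_⟩
  · intro x y h
    match x, y with
    | Sum.inl i, Sum.inl j =>
      simp only [Sum.elim_inl] at h
      exact congrArg Sum.inl (Fin.ext (Fa_inj hk1 i.isLt j.isLt (by omega)))
    | Sum.inr i, Sum.inr j =>
      simp only [Sum.elim_inr] at h
      exact congrArg Sum.inr (Fin.ext (Gb_inj hk1 i.isLt j.isLt (by omega)))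
    | Sum.inl i, Sum.inr j => simp only [Sum.elim_inl, Sum.elim_inr] at h; omega
    | Sum.inr i, Sum.inl j => simp only [Sum.elim_inl, Sum.elim_inr] at h; omega
  · ext n
    simp only [Set.mem_range, Finset.coe_biUnion, Finset.coe_insert, Finset.coe_singleton,
      Set.mem_iUnion, Set.mem_insert_iff, Set.mem_singleton_iff, Finset.mem_coe,
      Finset.mem_Icc]
    constructor
    · rintro ⟨(⟨i, hi⟩ | ⟨i, hi⟩), rfl⟩ <;> simp only [Sum.elim_inl, Sum.elim_inr]
      · exact ⟨Fa k i + 1, ⟨by omega, by have := Fa_lt hk1 hi; omega⟩, Or.inl (by omega)⟩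
      · exact ⟨Gb k i + 1, ⟨by omega, by have := Gb_lt hk1 hi; omega⟩, Or.inr (by omega)⟩
    · rintro ⟨i, ⟨hi1, hi2⟩, (rfl | rfl)⟩
      · obtain ⟨t, ht, hft⟩ := Fa_surj hk1 (show i - 1 < k by omega)
        exact ⟨Sum.inl ⟨t, ht⟩, by simp; omega⟩
      · obtain ⟨t, ht, hgt⟩ := Gb_surj hk1 (show i - 1 < k by omega)
        exact ⟨Sum.inr ⟨t, ht⟩, by simp; omega⟩
  · intro i
    have := Fa_add_Gb hk1 i.isLt
    simp only []
    omega
end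

section
/- Let p be a nonnegative integer divisible by 3 and let k be an odd positive integer. Then the 2k-element set J' = {p+3i−1, p+3i+1 : i ∈ [1,k]} can be partitioned into k pairs such that the multiset of pair sums is exactly the set {2p + 3(k+1)/2 + 3i : i ∈ [1,k]} of k consecutive multiples of 3. -/
/-- Let `p` be a nonnegative multiple of 3 and `k` an odd positive integer. The
`2k`-element set `J' = {p+3i−1, p+3i+1 : i ∈ [1,k]}` can be partitioned into `k` pairs
`{a i, b i}` whose pair sums are exactly the `k` consecutive multiples of 3 in
`{2p + 3(k+1)/2 + 3i : i ∈ [1,k]}`. -/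
theorem pairing_J'_odd (p k : ℕ) (hp : 3 ∣ p) (hk : Odd k) (hk0 : 0 < k) :
    ∃ a b : Fin k → ℕ,
      Function.Injective (Sum.elim a b) ∧
      Set.range (Sum.elim a b) =
        ↑((Finset.Icc 1 k).biUnion fun i => {p + 3 * i - 1, p + 3 * i + 1}) ∧
      ∀ i : Fin k, a i + b i = 2 * p + 3 * ((k + 1) / 2) + 3 * (i.val + 1) := by
  obtain ⟨n, hn⟩ := hk
  subst hn
  obtain ⟨q, hq⟩ := hp
  refine ⟨fun i => if i.val % 2 = 0 then p + 3 * (i.val / 2 + 1) - 1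
            else p + 3 * (n + 1 + (i.val + 1) / 2) - 1,
          fun i => if i.val % 2 = 0 then p + 3 * (n + 1 + i.val / 2) + 1
            else p + 3 * ((i.val + 1) / 2) + 1, ?_, ?_, ?_⟩
  · rintro (i | i) (j | j) h <;>
      simp only [Sum.elim_inl, Sum.elim_inr, Sum.inl.injEq, Sum.inr.injEq] at h ⊢ <;>
      [skip; skip; skip; skip] <;>
      · have hi := i.isLt
        have hj := j.isLt
        split_ifs at h <;> first
          | (exact Fin.ext (by omega))
          | (exfalso; omega)
  · ext x
    simp only [Set.mem_range, Finset.coe_biUnion, Finset.coe_Icc, Set.mem_iUnion,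
      Finset.coe_insert, Finset.coe_singleton, Set.mem_insert_iff, Set.mem_singleton_iff,
      Set.mem_Icc]
    constructor
    · rintro ⟨(i | i), rfl⟩ <;> have hi := i.isLt
      · rcases Nat.even_or_odd i.val with ⟨s, hs⟩ | ⟨s, hs⟩
        · exact ⟨s + 1, ⟨by omega, by omega⟩,
            Or.inl (by simp only [Sum.elim_inl, if_pos (by omega : i.val % 2 = 0)]; omega)⟩
        · exact ⟨n + 1 + (s + 1), ⟨by omega, by omega⟩,
            Or.inl (by simp only [Sum.elim_inl,
              if_neg (by omega : ¬ i.val % 2 = 0)]; omega)⟩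
      · rcases Nat.even_or_odd i.val with ⟨s, hs⟩ | ⟨s, hs⟩
        · exact ⟨n + 1 + s, ⟨by omega, by omega⟩,
            Or.inr (by simp only [Sum.elim_inr, if_pos (by omega : i.val % 2 = 0)]; omega)⟩
        · exact ⟨s + 1, ⟨by omega, by omega⟩,
            Or.inr (by simp only [Sum.elim_inr,
              if_neg (by omega : ¬ i.val % 2 = 0)]; omega)⟩
    · rintro ⟨t, ⟨ht1, ht2⟩, rfl | rfl⟩
      · rcases le_or_gt t (n + 1) with ht | ht
        · refine ⟨Sum.inl ⟨2 * (t - 1), by omega⟩, ?_⟩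
          simp only [Sum.elim_inl, if_pos (by omega : (2 * (t - 1)) % 2 = 0)]
          omega
        · refine ⟨Sum.inl ⟨2 * t - 2 * n - 3, by omega⟩, ?_⟩
          simp only [Sum.elim_inl, if_neg (by omega : ¬ (2 * t - 2 * n - 3) % 2 = 0)]
          omega
      · rcases le_or_gt t n with ht | ht
        · refine ⟨Sum.inr ⟨2 * t - 1, by omega⟩, ?_⟩
          simp only [Sum.elim_inr, if_neg (by omega : ¬ (2 * t - 1) % 2 = 0)]
          omega
        · refine ⟨Sum.inr ⟨2 * (t - n - 1), by omega⟩, ?_⟩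
          simp only [Sum.elim_inr, if_pos (by omega : (2 * (t - n - 1)) % 2 = 0)]
          omega
  · intro i
    have hi := i.isLt
    dsimp only
    split_ifs with h <;> omega
end

section
/- Let p be a nonnegative integer divisible by 3 and let k be a positive even integer. Then the 2k-element set J = {p+3i−2, p+3i−1 : i ∈ [1,k]} can be partitioned into k pairs such that the multiset of pair sums is exactly {2p + 3(k/2+1) + 3i : i ∈ [1,k−1]} ∪ {2p+3}, i.e., k−1 consecutive multiples of 3 together with the multiple of 3 equal to 2p+3. -/
/-- Index of the `a`-type element of pair `j`. -/
def paFa (k j : ℕ) : ℕ :=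
  if j = 0 then 0 else if j % 2 = 1 then (j + 1) / 2 else k / 2 + j / 2

/-- Index of the `b`-type element of pair `j`. -/
def paGb (k j : ℕ) : ℕ :=
  if j = 0 then 0 else if j % 2 = 1 then (j + 1) / 2 + k / 2 - 1 else j / 2

lemma paFa_lt {k j : ℕ} (hk : k % 2 = 0) (hj : j < k) : paFa k j < k := by
  unfold paFa; split_ifs <;> first | omega | contradiction

lemma paGb_lt {k j : ℕ} (hk : k % 2 = 0) (hj : j < k) : paGb k j < k := by
  unfold paGb; split_ifs <;> first | omega | contradiction

lemma paFa_inj {k i j : ℕ} (hk : k % 2 = 0) (hi : i < k) (hj : j < k)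
    (h : paFa k i = paFa k j) : i = j := by
  unfold paFa at h; split_ifs at h <;> omega

lemma paGb_inj {k i j : ℕ} (hk : k % 2 = 0) (hi : i < k) (hj : j < k)
    (h : paGb k i = paGb k j) : i = j := by
  unfold paGb at h; split_ifs at h <;> omega

lemma paFa_surj {k c : ℕ} (hk : k % 2 = 0) (hc : c < k) :
    ∃ j, j < k ∧ paFa k j = c := by
  rcases Nat.eq_zero_or_pos c with rfl | hc0
  · exact ⟨0, by omega, by unfold paFa; simp⟩
  by_cases h : c ≤ k / 2
  · exact ⟨2 * c - 1, by omega, by unfold paFa; split_ifs <;> first | omega | contradiction⟩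
  · exact ⟨2 * (c - k / 2), by omega, by unfold paFa; split_ifs <;> first | omega | contradiction⟩

lemma paGb_surj {k c : ℕ} (hk : k % 2 = 0) (hc : c < k) :
    ∃ j, j < k ∧ paGb k j = c := by
  rcases Nat.eq_zero_or_pos c with rfl | hc0
  · exact ⟨0, by omega, by unfold paGb; simp⟩
  by_cases h : c < k / 2
  · exact ⟨2 * c, by omega, by unfold paGb; split_ifs <;> first | omega | contradiction⟩
  · exact ⟨2 * (c - k / 2) + 1, by omega, by unfold paGb; split_ifs <;> first | omega | contradiction⟩

lemma paFa_add_paGb {k j : ℕ} (hk : k % 2 = 0) (hj0 : 0 < j) (hj : j < k) :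
    paFa k j + paGb k j = k / 2 + j := by
  unfold paFa paGb; split_ifs <;> first | omega | contradiction

/-- Let `p` be a nonnegative multiple of 3 and `k` a positive even integer. The
`2k`-element set `J = {p+3i−2, p+3i−1 : i ∈ [1,k]}` can be partitioned into `k` pairs
`{a i, b i}` whose pair sums are exactly the `k−1` consecutive multiples of 3 in
`{2p + 3(k/2+1) + 3i : i ∈ [1,k−1]}` together with the multiple of 3 equal to `2p+3`. -/
theorem pairing_J_even (p k : ℕ) (hp : 3 ∣ p) (hk : Even k) (hk0 : 0 < k) :
    ∃ a b : Fin k → ℕ,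
      Function.Injective (Sum.elim a b) ∧
      Set.range (Sum.elim a b) =
        ↑((Finset.Icc 1 k).biUnion fun i => {p + 3 * i - 2, p + 3 * i - 1}) ∧
      a ⟨0, hk0⟩ + b ⟨0, hk0⟩ = 2 * p + 3 ∧
      ∀ i : Fin k, i.val ≠ 0 → a i + b i = 2 * p + 3 * (k / 2 + 1) + 3 * i.val := by
  have hk2 : k % 2 = 0 := Nat.even_iff.mp hk
  refine ⟨fun j => p + 3 * paFa k j.val + 1, fun j => p + 3 * paGb k j.val + 2,
    ?_, ?_, ?_, ?_⟩
  · intro x y hxy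
    match x, y with
    | .inl x, .inl y =>
      simp only [Sum.elim_inl] at hxy
      exact congrArg Sum.inl (Fin.ext (paFa_inj hk2 x.isLt y.isLt (by omega)))
    | .inl x, .inr y =>
      simp only [Sum.elim_inl, Sum.elim_inr] at hxy; omega
    | .inr x, .inl y =>
      simp only [Sum.elim_inl, Sum.elim_inr] at hxy; omega
    | .inr x, .inr y =>
      simp only [Sum.elim_inr] at hxy
      exact congrArg Sum.inr (Fin.ext (paGb_inj hk2 x.isLt y.isLt (by omega)))
  · ext x
    simp only [Set.mem_range, Finset.coe_biUnion, Finset.mem_coe, Finset.mem_Icc,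
      Set.mem_iUnion, Finset.coe_insert, Set.mem_insert_iff, Finset.coe_singleton,
      Set.mem_singleton_iff]
    constructor
    · rintro ⟨s, rfl⟩
      match s with
      | .inl j =>
        have := paFa_lt hk2 j.isLt
        exact ⟨paFa k j.val + 1, ⟨by omega, by omega⟩, Or.inl (by simp; omega)⟩
      | .inr j =>
        have := paGb_lt hk2 j.isLt
        exact ⟨paGb k j.val + 1, ⟨by omega, by omega⟩, Or.inr (by simp; omega)⟩
    · rintro ⟨i, ⟨h1, h2⟩, rfl | rfl⟩
      · obtain ⟨j, hj, hfj⟩ := paFa_surj hk2 (c := i - 1) (by omega)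
        exact ⟨Sum.inl ⟨j, hj⟩, by simp; omega⟩
      · obtain ⟨j, hj, hfj⟩ := paGb_surj hk2 (c := i - 1) (by omega)
        exact ⟨Sum.inr ⟨j, hj⟩, by simp; omega⟩
  · simp [paFa, paGb]; omega
  · intro i hi
    have h := paFa_add_paGb hk2 (j := i.val) (by omega) i.isLt
    show p + 3 * paFa k i.val + 1 + (p + 3 * paGb k i.val + 2) = _
    omega
end

section
/- Let p be a nonnegative integer divisible by 3 and let k be a positive even integer. Then the 2k-element set J' = {p+3i−1, p+3i+1 : i ∈ [1,k]} can be partitioned into k pairs such that the multiset of pair sums is exactly {2p + 3(k/2+2) + 3i : i ∈ [1,k−1]} ∪ {2p+6}, i.e., k−1 consecutive multiples of 3 together with the multiple of 3 equal to 2p+6. -/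
private def Ae (m n : ℕ) : ℕ :=
  if n = 0 then 0 else if n % 2 = 1 then (n+1)/2 else m + n/2

private def Be (m n : ℕ) : ℕ :=
  if n = 0 then 0 else if n % 2 = 1 then m + (n-1)/2 else n/2

private lemma Ae_lt {m n : ℕ} (hm : 0 < m) (h : n < 2*m) : Ae m n < 2*m := by
  unfold Ae; split_ifs <;> first | omega | tauto

private lemma Be_lt {m n : ℕ} (hm : 0 < m) (h : n < 2*m) : Be m n < 2*m := by
  unfold Be; split_ifs <;> first | omega | tauto

private lemma Ae_inj {m n₁ n₂ : ℕ} (h₁ : n₁ < 2*m) (h₂ : n₂ < 2*m)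
    (h : Ae m n₁ = Ae m n₂) : n₁ = n₂ := by
  unfold Ae at h; split_ifs at h <;> omega

private lemma Be_inj {m n₁ n₂ : ℕ} (h₁ : n₁ < 2*m) (h₂ : n₂ < 2*m)
    (h : Be m n₁ = Be m n₂) : n₁ = n₂ := by
  unfold Be at h; split_ifs at h <;> omega

private lemma Ae_surj {m j : ℕ} (hm : 0 < m) (hj : j < 2*m) :
    ∃ n, n < 2*m ∧ Ae m n = j := by
  rcases eq_or_ne j 0 with rfl | h0
  · exact ⟨0, by omega, by simp [Ae]⟩
  · rcases le_or_gt j m with h1 | h1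
    · exact ⟨2*j-1, by omega, by unfold Ae; split_ifs <;> first | omega | tauto⟩
    · exact ⟨2*(j-m), by omega, by unfold Ae; split_ifs <;> first | omega | tauto⟩

private lemma Be_surj {m j : ℕ} (hm : 0 < m) (hj : j < 2*m) :
    ∃ n, n < 2*m ∧ Be m n = j := by
  rcases eq_or_ne j 0 with rfl | h0
  · exact ⟨0, by omega, by simp [Be]⟩
  · rcases lt_or_ge j m with h1 | h1
    · exact ⟨2*j, by omega, by unfold Be; split_ifs <;> first | omega | tauto⟩
    · exact ⟨2*(j-m)+1, by omega, by unfold Be; split_ifs <;> first | omega | tauto⟩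

private lemma Ae_add_Be {m n : ℕ} (hn : n ≠ 0) (h : n < 2*m) :
    Ae m n + Be m n = m + n := by
  unfold Ae Be; split_ifs <;> first | omega | tauto

/-- Let `p` be a nonnegative multiple of 3 and `k` a positive even integer. The
`2k`-element set `J' = {p+3i−1, p+3i+1 : i ∈ [1,k]}` can be partitioned into `k` pairs
`{a i, b i}` whose pair sums are exactly the `k−1` consecutive multiples of 3 in
`{2p + 3(k/2+2) + 3i : i ∈ [1,k−1]}` together with the multiple of 3 equal to `2p+6`. -/
theorem pairing_J'_even (p k : ℕ) (hp : 3 ∣ p) (hk : Even k) (hk0 : 0 < k) :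
    ∃ a b : Fin k → ℕ,
      Function.Injective (Sum.elim a b) ∧
      Set.range (Sum.elim a b) =
        ↑((Finset.Icc 1 k).biUnion fun i => {p + 3 * i - 1, p + 3 * i + 1}) ∧
      a ⟨0, hk0⟩ + b ⟨0, hk0⟩ = 2 * p + 6 ∧
      ∀ i : Fin k, i.val ≠ 0 → a i + b i = 2 * p + 3 * (k / 2 + 2) + 3 * i.val := by
  obtain ⟨m, hm⟩ := hk
  have hk2 : k = 2 * m := by omega
  have hm0 : 0 < m := by omega
  refine ⟨fun t => p + 3 * Ae m t.val + 2, fun t => p + 3 * Be m t.val + 4, ?_, ?_, ?_, ?_⟩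
  · intro x y h
    cases x with
    | inl s => cases y with
      | inl t =>
        simp only [Sum.elim_inl] at h
        have := Ae_inj (m := m) (by omega : s.val < 2*m) (by omega : t.val < 2*m) (by omega)
        exact congrArg Sum.inl (Fin.ext this)
      | inr t =>
        simp only [Sum.elim_inl, Sum.elim_inr] at h
        omega
    | inr s => cases y with
      | inl t =>
        simp only [Sum.elim_inl, Sum.elim_inr] at h
        omega
      | inr t =>
        simp only [Sum.elim_inr] at h
        have := Be_inj (m := m) (by omega : s.val < 2*m) (by omega : t.val < 2*m) (by omega)
        exact congrArg Sum.inr (Fin.ext this)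
  · ext x
    simp only [Set.mem_range, Finset.coe_biUnion, Finset.coe_Icc, Set.mem_iUnion,
      Finset.coe_insert, Finset.coe_singleton, Set.mem_insert_iff, Set.mem_singleton_iff,
      Set.mem_Icc]
    constructor
    · rintro ⟨t, ht⟩
      cases t with
      | inl s =>
        simp only [Sum.elim_inl] at ht
        have hlt : Ae m s.val < 2*m := Ae_lt hm0 (by omega)
        exact ⟨Ae m s.val + 1, ⟨by omega, by omega⟩, Or.inl (by omega)⟩
      | inr s =>
        simp only [Sum.elim_inr] at ht
        have hlt : Be m s.val < 2*m := Be_lt hm0 (by omega)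
        exact ⟨Be m s.val + 1, ⟨by omega, by omega⟩, Or.inr (by omega)⟩
    · rintro ⟨i, ⟨hi1, hi2⟩, hx | hx⟩
      · obtain ⟨n, hn, hAe⟩ := Ae_surj hm0 (show i - 1 < 2*m by omega)
        exact ⟨Sum.inl ⟨n, by omega⟩, by simp only [Sum.elim_inl]; omega⟩
      · obtain ⟨n, hn, hBe⟩ := Be_surj hm0 (show i - 1 < 2*m by omega)
        exact ⟨Sum.inr ⟨n, by omega⟩, by simp only [Sum.elim_inr]; omega⟩
  · have hA : Ae m 0 = 0 := by simp [Ae]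
    have hB : Be m 0 = 0 := by simp [Be]
    show p + 3 * Ae m 0 + 2 + (p + 3 * Be m 0 + 4) = 2 * p + 6
    omega
  · intro i hi
    have h1 : Ae m i.val + Be m i.val = m + i.val := Ae_add_Be hi (by omega)
    have h2 : k / 2 = m := by omega
    rw [h2]
    show p + 3 * Ae m i.val + 2 + (p + 3 * Be m i.val + 4) = 2 * p + 3 * (m + 2) + 3 * i.val
    omega
end

section
/- Let G = (A ∪ B, E) be a bipartite graph with minimum degree at least 15, let X ∪ Y be a partition of A ∪ B such that Y is an independent set of G and the bipartite subgraph G[X,Y] contains a matching M saturating X, let Z ⊆ Y be the set of vertices of Y not saturated by M, let Y_even be the set of vertices of Y of even degree in G, and let I1 be the set of isolated vertices of the induced subgraph G[X]. Then there exist disjoint edge sets E1 and E2 in G[X,Y] − M such that |E1| = |Z| and E1 covers every vertex of Z exactly once, |E2| = |Y_even| and E2 covers every vertex of Y_even exactly once, and every vertex of I1 has positive degree in the graph G[X,Y] − (M ∪ E1 ∪ E2). -/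
/-- If `v` and `w` are distinct members of an edge, they are adjacent. -/
lemma adj_of_mem_mem {V : Type*} {G : SimpleGraph V} {e : Sym2 V} {v w : V}
    (he : e ∈ G.edgeSet) (hv : v ∈ e) (hw : w ∈ e) (hne : v ≠ w) : G.Adj v w := by
  have : e = s(v, w) := (Sym2.mem_and_mem_iff hne).1 ⟨hv, hw⟩
  rwa [this, SimpleGraph.mem_edgeSet] at he

/-- Let `G` be a bipartite graph with minimum degree at least 15, let `X ∪ Xᶜ` be a
partition of the vertices such that `Y = Xᶜ` is independent and there is a matching `M`
among the edges between `X` and `Y` saturating `X`. Let `Z ⊆ Y` be the set of vertices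
of `Y` not saturated by `M`, `Y_even` the set of vertices of `Y` of even degree in `G`,
and `I1` the set of isolated vertices of the induced subgraph `G[X]`. Then there exist
disjoint edge sets `E1, E2` among the edges of `G[X,Y] − M` such that `|E1| = |Z|` and
`E1` covers each vertex of `Z` exactly once, `|E2| = |Y_even|` and `E2` covers each
vertex of `Y_even` exactly once, and every vertex of `I1` has positive degree in
`G[X,Y] − (M ∪ E1 ∪ E2)`. -/
theorem exists_E1_E2_covering
    {V : Type*} [Fintype V] [DecidableEq V]
    (G : SimpleGraph V) [DecidableRel G.Adj]
    (hbip : G.Colorable 2)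
    (hdeg : ∀ v : V, 15 ≤ G.degree v)
    (X : Set V) [DecidablePred (· ∈ X)]
    (hYind : ∀ ⦃v w : V⦄, v ∉ X → w ∉ X → ¬ G.Adj v w)
    (M : Finset (Sym2 V))
    (hME : M ⊆ G.edgeFinset)
    (hMcross : ∀ e ∈ M, ∃ x y : V, e = s(x, y) ∧ x ∈ X ∧ y ∉ X)
    (hMmatch : ∀ v : V, ∀ e ∈ M, ∀ e' ∈ M, v ∈ e → v ∈ e' → e = e')
    (hMsat : ∀ x ∈ X, ∃ e ∈ M, x ∈ e) :
    ∃ E1 E2 : Finset (Sym2 V),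
      Disjoint E1 E2 ∧
      (∀ e ∈ E1, e ∈ G.edgeFinset ∧ e ∉ M ∧ ∃ x y : V, e = s(x, y) ∧ x ∈ X ∧ y ∉ X) ∧
      (∀ e ∈ E2, e ∈ G.edgeFinset ∧ e ∉ M ∧ ∃ x y : V, e = s(x, y) ∧ x ∈ X ∧ y ∉ X) ∧
      E1.card = (Finset.univ.filter fun y : V => y ∉ X ∧ ∀ e ∈ M, y ∉ e).card ∧
      (∀ z : V, z ∉ X → (∀ e ∈ M, z ∉ e) →
        (E1.filter fun e => z ∈ e).card = 1) ∧
      E2.card = (Finset.univ.filter fun y : V => y ∉ X ∧ Even (G.degree y)).card ∧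
      (∀ y : V, y ∉ X → Even (G.degree y) →
        (E2.filter fun e => y ∈ e).card = 1) ∧
      (∀ x : V, x ∈ X → (∀ w ∈ X, ¬ G.Adj x w) →
        ∃ e ∈ G.edgeFinset, e ∉ M ∧ e ∉ E1 ∧ e ∉ E2 ∧ x ∈ e ∧
          ∃ x' y : V, e = s(x', y) ∧ x' ∈ X ∧ y ∉ X) := by
  classical
  set Zfin : Finset V := Finset.univ.filter fun y : V => y ∉ X ∧ ∀ e ∈ M, y ∉ e with hZfin
  set Efin : Finset V := Finset.univ.filter fun y : V => y ∉ X ∧ Even (G.degree y) with hEfin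
  set Ifin : Finset V := Finset.univ.filter fun x : V => x ∈ X ∧ ∀ w ∈ X, ¬ G.Adj x w
    with hIfin
  -- the index type: disjoint union of Z, Y_even, I1
  let ι := (↥Zfin ⊕ ↥Efin ⊕ ↥Ifin)
  let vert : ι → V := Sum.elim (fun z => z.1) (Sum.elim (fun y => y.1) (fun x => x.1))
  let t : ι → Finset (Sym2 V) := fun ℓ => G.incidenceFinset (vert ℓ) \ M
  -- basic facts about `t`
  have ht_mem : ∀ ℓ (e : Sym2 V), e ∈ t ℓ → e ∈ G.edgeFinset ∧ e ∉ M ∧ vert ℓ ∈ e := by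
    intro ℓ e he
    rw [Finset.mem_sdiff, SimpleGraph.mem_incidenceFinset] at he
    exact ⟨SimpleGraph.mem_edgeFinset.2 he.1.1, he.2, he.1.2⟩
  -- each `t ℓ` has at least 14 elements
  have htcard : ∀ ℓ, 14 ≤ (t ℓ).card := by
    intro ℓ
    have h1 : (G.incidenceFinset (vert ℓ) ∩ M).card ≤ 1 := by
      refine Finset.card_le_one.2 ?_
      intro a ha b hb
      rw [Finset.mem_inter, SimpleGraph.mem_incidenceFinset] at ha hb
      exact hMmatch (vert ℓ) a ha.2 b hb.2 ha.1.2 hb.1.2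
    have h2 : (t ℓ).card = (G.incidenceFinset (vert ℓ)).card -
        (G.incidenceFinset (vert ℓ) ∩ M).card := by
      rw [show t ℓ = G.incidenceFinset (vert ℓ) \ (G.incidenceFinset (vert ℓ) ∩ M) from
        (Finset.sdiff_inter_self_left _ _).symm]
      exact Finset.card_sdiff_of_subset Finset.inter_subset_left
    have h3 : (G.incidenceFinset (vert ℓ)).card = G.degree (vert ℓ) :=
      G.card_incidenceFinset_eq_degree (vert ℓ)
    have h4 := hdeg (vert ℓ)
    omega
  -- uniqueness of the endpoint outside X
  have huniq : ∀ e ∈ G.edgeFinset, ∀ v w : V, v ∈ e → w ∈ e → v ∉ X → w ∉ X → v = w := by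
    intro e he v w hv hw hvX hwX
    by_contra hne
    exact hYind hvX hwX (adj_of_mem_mem (SimpleGraph.mem_edgeFinset.1 he) hv hw hne)
  have hZuniq : ∀ (z1 z2 : ↥Zfin) (e : Sym2 V), e ∈ G.edgeFinset →
      z1.1 ∈ e → z2.1 ∈ e → z1 = z2 := fun z1 z2 e he h1 h2 =>
    Subtype.ext (huniq e he z1.1 z2.1 h1 h2
      (Finset.mem_filter.1 z1.2).2.1 (Finset.mem_filter.1 z2.2).2.1)
  have hEuniq : ∀ (y1 y2 : ↥Efin) (e : Sym2 V), e ∈ G.edgeFinset →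
      y1.1 ∈ e → y2.1 ∈ e → y1 = y2 := fun y1 y2 e he h1 h2 =>
    Subtype.ext (huniq e he y1.1 y2.1 h1 h2
      (Finset.mem_filter.1 y1.2).2.1 (Finset.mem_filter.1 y2.2).2.1)
  have hIuniq : ∀ (x1 x2 : ↥Ifin) (e : Sym2 V), e ∈ G.edgeFinset →
      x1.1 ∈ e → x2.1 ∈ e → x1 = x2 := by
    intro x1 x2 e he h1 h2
    by_contra hne
    have hne' : x1.1 ≠ x2.1 := fun h => hne (Subtype.ext h)
    have hadj := adj_of_mem_mem (SimpleGraph.mem_edgeFinset.1 he) h1 h2 hne'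
    have hx1 := (Finset.mem_filter.1 x1.2).2
    have hx2 := (Finset.mem_filter.1 x2.2).2
    exact hx1.2 x2.1 hx2.1 hadj
  -- each edge is usable by at most 3 indices
  have hmult : ∀ (s : Finset ι) (e : Sym2 V), (s.filter fun ℓ => e ∈ t ℓ).card ≤ 3 := by
    intro s e
    have key : ((s.filter fun ℓ => e ∈ t ℓ)).card ≤ (Finset.univ : Finset (Fin 3)).card := by
      apply Finset.card_le_card_of_injOn
        (fun ℓ => Sum.elim (fun _ => (0 : Fin 3)) (Sum.elim (fun _ => 1) (fun _ => 2)) ℓ)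
      · intro _ _; exact Finset.mem_univ _
      · intro a ha b hb htag
        rw [Finset.mem_coe, Finset.mem_filter] at ha hb
        obtain ⟨ea1, ea2, ea3⟩ := ht_mem a e ha.2
        obtain ⟨eb1, eb2, eb3⟩ := ht_mem b e hb.2
        rcases a with za | ya | xa <;> rcases b with zb | yb | xb <;>
          simp only [Sum.elim_inl, Sum.elim_inr] at htag ea3 eb3
        · exact congrArg Sum.inl (hZuniq za zb e ea1 ea3 eb3)
        · exact absurd htag (by decide)
        · exact absurd htag (by decide)
        · exact absurd htag (by decide)
        · exact congrArg Sum.inr (congrArg Sum.inl (hEuniq ya yb e ea1 ea3 eb3))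
        · exact absurd htag (by decide)
        · exact absurd htag (by decide)
        · exact absurd htag (by decide)
        · exact congrArg Sum.inr (congrArg Sum.inr (hIuniq xa xb e ea1 ea3 eb3))
    simpa using key
  -- Hall's condition
  have hall : ∀ s : Finset ι, s.card ≤ (s.biUnion t).card := by
    intro s
    set U := s.biUnion t with hU
    have h14 : 14 * s.card ≤ ∑ ℓ ∈ s, (t ℓ).card := by
      calc 14 * s.card = ∑ _ℓ ∈ s, 14 := by rw [Finset.sum_const, smul_eq_mul, mul_comm]
        _ ≤ ∑ ℓ ∈ s, (t ℓ).card := Finset.sum_le_sum fun ℓ _ => htcard ℓ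
    have hswap : ∑ ℓ ∈ s, (t ℓ).card ≤ 3 * U.card := by
      have step1 : ∑ ℓ ∈ s, (t ℓ).card
          = ∑ ℓ ∈ s, ∑ e ∈ U, (if e ∈ t ℓ then 1 else 0) := by
        refine Finset.sum_congr rfl fun ℓ hℓ => ?_
        rw [← Finset.card_filter]
        congr 1
        ext e
        simp only [Finset.mem_filter]
        exact ⟨fun h => ⟨Finset.mem_biUnion.2 ⟨ℓ, hℓ, h⟩, h⟩, fun h => h.2⟩
      rw [step1, Finset.sum_comm]
      calc ∑ e ∈ U, ∑ ℓ ∈ s, (if e ∈ t ℓ then 1 else 0)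
          = ∑ e ∈ U, (s.filter fun ℓ => e ∈ t ℓ).card := by
            refine Finset.sum_congr rfl fun e _ => ?_
            rw [Finset.card_filter]
        _ ≤ ∑ _e ∈ U, 3 := Finset.sum_le_sum fun e _ => hmult s e
        _ = 3 * U.card := by rw [Finset.sum_const, smul_eq_mul, mul_comm]
    omega
  obtain ⟨f, hfinj, hf⟩ := (Finset.all_card_le_biUnion_card_iff_exists_injective t).1 hall
  have hfe : ∀ ℓ, f ℓ ∈ G.edgeFinset := fun ℓ => (ht_mem ℓ (f ℓ) (hf ℓ)).1
  have hfM : ∀ ℓ, f ℓ ∉ M := fun ℓ => (ht_mem ℓ (f ℓ) (hf ℓ)).2.1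
  have hfv : ∀ ℓ, vert ℓ ∈ f ℓ := fun ℓ => (ht_mem ℓ (f ℓ) (hf ℓ)).2.2
  -- crossing structure of edges incident to a vertex outside X
  have hcrossY : ∀ (v : V), v ∉ X → ∀ e ∈ G.edgeFinset, v ∈ e →
      ∃ x y : V, e = s(x, y) ∧ x ∈ X ∧ y ∉ X := by
    intro v hv e he hve
    obtain ⟨w, rfl⟩ := Sym2.mem_iff_exists.1 hve
    have hadj : G.Adj v w := G.mem_edgeSet.1 (SimpleGraph.mem_edgeFinset.1 he)
    have hw : w ∈ X := by
      by_contra hw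
      exact hYind hv hw hadj
    exact ⟨w, v, Sym2.eq_swap, hw, hv⟩
  set E1 : Finset (Sym2 V) := Finset.univ.image (fun z : ↥Zfin => f (Sum.inl z)) with hE1
  set E2 : Finset (Sym2 V) :=
    Finset.univ.image (fun y : ↥Efin => f (Sum.inr (Sum.inl y))) with hE2
  have hE1mem : ∀ e ∈ E1, ∃ z : ↥Zfin, e = f (Sum.inl z) := by
    intro e he
    obtain ⟨z, _, hz⟩ := Finset.mem_image.1 he
    exact ⟨z, hz.symm⟩
  have hE2mem : ∀ e ∈ E2, ∃ y : ↥Efin, e = f (Sum.inr (Sum.inl y)) := by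
    intro e he
    obtain ⟨y, _, hy⟩ := Finset.mem_image.1 he
    exact ⟨y, hy.symm⟩
  refine ⟨E1, E2, ?_, ?_, ?_, ?_, ?_, ?_, ?_, ?_⟩
  · -- disjointness
    rw [Finset.disjoint_left]
    intro e he1 he2
    obtain ⟨z, rfl⟩ := hE1mem e he1
    obtain ⟨y, hy⟩ := hE2mem _ he2
    exact absurd (hfinj hy) (by simp)
  · -- E1 edges are cross edges avoiding M
    intro e he
    obtain ⟨z, rfl⟩ := hE1mem e he
    have hz := (Finset.mem_filter.1 z.2).2
    exact ⟨hfe _, hfM _, hcrossY z.1 hz.1 _ (hfe _) (hfv (Sum.inl z))⟩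
  · -- E2 edges are cross edges avoiding M
    intro e he
    obtain ⟨y, rfl⟩ := hE2mem e he
    have hy := (Finset.mem_filter.1 y.2).2
    exact ⟨hfe _, hfM _, hcrossY y.1 hy.1 _ (hfe _) (hfv (Sum.inr (Sum.inl y)))⟩
  · -- |E1| = |Z|
    rw [hE1, Finset.card_image_of_injective _ (fun a b hab => by
      have := hfinj hab; exact Sum.inl_injective this)]
    simp [hZfin]
  · -- E1 covers each z ∈ Z exactly once
    intro z hz1 hz2
    have hzZ : z ∈ Zfin := Finset.mem_filter.2 ⟨Finset.mem_univ _, hz1, hz2⟩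
    have hzmem : f (Sum.inl (⟨z, hzZ⟩ : ↥Zfin)) ∈ E1.filter fun e => z ∈ e := by
      refine Finset.mem_filter.2 ⟨Finset.mem_image.2 ⟨⟨z, hzZ⟩, Finset.mem_univ _, rfl⟩, ?_⟩
      exact hfv (Sum.inl ⟨z, hzZ⟩)
    rw [Finset.card_eq_one]
    refine ⟨f (Sum.inl ⟨z, hzZ⟩), ?_⟩
    ext e
    simp only [Finset.mem_filter, Finset.mem_singleton]
    constructor
    · rintro ⟨he1, hze⟩
      obtain ⟨z', rfl⟩ := hE1mem e he1
      have hz' := (Finset.mem_filter.1 z'.2).2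
      have : z'.1 = z :=
        huniq _ (hfe _) z'.1 z (hfv (Sum.inl z')) hze hz'.1 hz1
      congr 2
      exact Subtype.ext this
    · rintro rfl
      exact Finset.mem_filter.1 hzmem
  · -- |E2| = |Y_even|
    rw [hE2, Finset.card_image_of_injective _ (fun a b hab => by
      have := hfinj hab
      exact Sum.inl_injective (Sum.inr_injective this))]
    simp [hEfin]
  · -- E2 covers each even-degree y ∈ Y exactly once
    intro y hy1 hy2
    have hyE : y ∈ Efin := Finset.mem_filter.2 ⟨Finset.mem_univ _, hy1, hy2⟩
    rw [Finset.card_eq_one]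
    refine ⟨f (Sum.inr (Sum.inl ⟨y, hyE⟩)), ?_⟩
    ext e
    simp only [Finset.mem_filter, Finset.mem_singleton]
    constructor
    · rintro ⟨he2, hye⟩
      obtain ⟨y', rfl⟩ := hE2mem e he2
      have hy' := (Finset.mem_filter.1 y'.2).2
      have : y'.1 = y :=
        huniq _ (hfe _) y'.1 y (hfv (Sum.inr (Sum.inl y'))) hye hy'.1 hy1
      congr 3
      exact Subtype.ext this
    · rintro rfl
      exact ⟨Finset.mem_image.2 ⟨⟨y, hyE⟩, Finset.mem_univ _, rfl⟩,
        hfv (Sum.inr (Sum.inl ⟨y, hyE⟩))⟩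
  · -- every isolated vertex of G[X] keeps an unused cross edge
    intro x hx1 hx2
    have hxI : x ∈ Ifin := Finset.mem_filter.2 ⟨Finset.mem_univ _, hx1, hx2⟩
    set ℓ : ι := Sum.inr (Sum.inr (⟨x, hxI⟩ : ↥Ifin)) with hℓ
    refine ⟨f ℓ, hfe ℓ, hfM ℓ, ?_, ?_, hfv ℓ, ?_⟩
    · intro hmem
      obtain ⟨z, hz⟩ := hE1mem _ hmem
      exact absurd (hfinj hz) (by simp)
    · intro hmem
      obtain ⟨y, hy⟩ := hE2mem _ hmem
      exact Sum.inl_ne_inr (Sum.inr_injective (hfinj hy)).symm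
    · have hxe : x ∈ f ℓ := hfv ℓ
      obtain ⟨w, hw⟩ := Sym2.mem_iff_exists.1 hxe
      have hadj : G.Adj x w := by
        have := SimpleGraph.mem_edgeFinset.1 (hfe ℓ)
        rw [hw] at this
        exact G.mem_edgeSet.1 this
      have hwX : w ∉ X := fun hwX => hx2 w hwX hadj
      exact ⟨x, w, hw, hx1, hwX⟩
end
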